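/- arXiv:nlin/0103035 — 7 statements merged into one kernel-verified Lean document; each statement's English description precedes it below -/
import Mathlib

section
/- GLM continuity equation (deterministic core). Suppose D : ℝⁿ × ℝ → ℝ is smooth and satisfies the continuity equation ∂ₜD + div(D u) = 0 everywhere. Then the transformed density D̃(x,t) := D(ψ(t,x), t) · det(Dₓψ(t,x)) satisfies the continuity equation with the pulled-back velocity: ∂ₜD̃ + div(D̃ w) = 0 everywhere. -/
open scoped BigOperators

noncomputable section

/-- Spatial Jacobian matrix of a map `f : ℝⁿ → ℝⁿ` at `x`:
`(jacobian f x) i j = ∂fⁱ/∂xʲ (x)`. -/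
def jacobian {n : ℕ} (f : (Fin n → ℝ) → (Fin n → ℝ)) (x : Fin n → ℝ) :
    Matrix (Fin n) (Fin n) ℝ :=
  fun i j => fderiv ℝ (fun y => f y i) x (Pi.single j 1)

/-! ### Auxiliary lemmas -/

/-- The determinant as a continuous multilinear map in the rows. -/
def detCML (n : ℕ) : ContinuousMultilinearMap ℝ (fun _ : Fin n => (Fin n → ℝ)) ℝ :=
  MultilinearMap.mkContinuous
    ((Matrix.detRowAlternating : (Fin n → ℝ) [⋀^Fin n]→ₗ[ℝ] ℝ)).toMultilinearMap
    (n.factorial) (by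
      intro m
      have h1 : (Matrix.detRowAlternating (R := ℝ) (n := Fin n)) m = (Matrix.of m).det := rfl
      rw [AlternatingMap.coe_multilinearMap, h1, Matrix.det_apply]
      refine (norm_sum_le _ _).trans ?_
      have hb : ∀ σ : Equiv.Perm (Fin n),
          ‖Equiv.Perm.sign σ • ∏ i, Matrix.of m (σ i) i‖ ≤ ∏ i, ‖m i‖ := by
        intro σ
        have hsg : ‖Equiv.Perm.sign σ • ∏ i, Matrix.of m (σ i) i‖
            = ‖∏ i, Matrix.of m (σ i) i‖ := by
          rcases Int.units_eq_one_or (Equiv.Perm.sign σ) with h | h <;> simp [h]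
        rw [hsg]
        have h2 : ‖∏ i, Matrix.of m (σ i) i‖ ≤ ∏ i, ‖m (σ i)‖ := by
          rw [norm_prod]
          exact Finset.prod_le_prod (fun i _ => norm_nonneg _)
            (fun i _ => norm_le_pi_norm (m (σ i)) i)
        exact h2.trans (le_of_eq (Equiv.prod_comp σ (fun i => ‖m i‖)))
      calc ∑ σ : Equiv.Perm (Fin n), ‖Equiv.Perm.sign σ • ∏ i, Matrix.of m (σ i) i‖
          ≤ ∑ _σ : Equiv.Perm (Fin n), ∏ i, ‖m i‖ := Finset.sum_le_sum (fun σ _ => hb σ)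
        _ = (n.factorial : ℝ) * ∏ i, ‖m i‖ := by
            rw [Finset.sum_const, Finset.card_univ, Fintype.card_perm, Fintype.card_fin,
              nsmul_eq_mul]
      )

lemma detCML_apply {n : ℕ} (m : Fin n → (Fin n → ℝ)) :
    detCML n m = (Matrix.of m).det := rfl

lemma det_updateRow_eq {n : ℕ} (A : Matrix (Fin n) (Fin n) ℝ) (i : Fin n) (b : Fin n → ℝ) :
    (A.updateRow i b).det = ∑ j, b j * A.adjugate j i := by
  rw [Matrix.det_eq_sum_mul_adjugate_row (A.updateRow i b) i]
  refine Finset.sum_congr rfl (fun j _ => ?_)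
  have e1 : (A.updateRow i b) i j = b j := by simp [Matrix.updateRow_self]
  have e2 : (A.updateRow i b).adjugate j i = A.adjugate j i := by
    rw [Matrix.adjugate_apply, Matrix.adjugate_apply]
    congr 1
    ext a b'
    by_cases h : a = i <;> simp [Matrix.updateRow_apply, h]
  rw [e1, e2]

/-- Jacobi's formula, `HasFDerivAt` version. -/
theorem hasFDerivAt_matrix_det {E : Type*} [NormedAddCommGroup E] [NormedSpace ℝ E] {n : ℕ}
    {M : E → Matrix (Fin n) (Fin n) ℝ} {M' : Fin n → Fin n → (E →L[ℝ] ℝ)} {x : E}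
    (h : ∀ i j, HasFDerivAt (fun y => M y i j) (M' i j) x) :
    HasFDerivAt (fun y => (M y).det)
      (∑ i, ∑ j, (M x).adjugate i j • M' j i) x := by
  have row : ∀ i, HasFDerivAt (fun y => M y i) (ContinuousLinearMap.pi (M' i)) x :=
    fun i => hasFDerivAt_pi.2 (h i)
  have H := HasFDerivAt.multilinear_comp (detCML n) row
  have hfun : (fun y => detCML n (fun i => M y i)) = fun y => (M y).det := by
    funext y; rw [detCML_apply]; rfl
  rw [hfun] at H
  refine H.congr_fderiv ?_
  symm
  ext v
  simp only [ContinuousLinearMap.sum_apply, ContinuousLinearMap.coe_comp', Function.comp_apply,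
    ContinuousMultilinearMap.toContinuousLinearMap_apply, ContinuousLinearMap.smul_apply,
    ContinuousLinearMap.pi_apply, smul_eq_mul]
  have key : ∀ i : Fin n,
      detCML n (Function.update (fun j => M x j) i ((ContinuousLinearMap.pi (M' i)) v))
      = ∑ j, M' i j v * (M x).adjugate j i := by
    intro i
    have : detCML n (Function.update (fun j => M x j) i ((ContinuousLinearMap.pi (M' i)) v))
        = ((M x).updateRow i ((ContinuousLinearMap.pi (M' i)) v)).det := rfl
    rw [this, det_updateRow_eq]
    exact Finset.sum_congr rfl (fun j _ => by rw [ContinuousLinearMap.pi_apply])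
  rw [Finset.sum_congr rfl (fun i _ => key i), Finset.sum_comm]
  exact Finset.sum_congr rfl (fun j _ => Finset.sum_congr rfl (fun i _ => mul_comm _ _))

/-- Jacobi's formula, `HasDerivAt` version. -/
theorem hasDerivAt_matrix_det {n : ℕ} {M : ℝ → Matrix (Fin n) (Fin n) ℝ}
    {M' : Fin n → Fin n → ℝ} {t : ℝ}
    (h : ∀ i j, HasDerivAt (fun s => M s i j) (M' i j) t) :
    HasDerivAt (fun s => (M s).det) (∑ i, ∑ j, (M t).adjugate i j * M' j i) t := by
  have H := hasFDerivAt_matrix_det (M := M)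
    (M' := fun i j => (ContinuousLinearMap.smulRight (1 : ℝ →L[ℝ] ℝ) (M' i j)))
    (x := t) (fun i j => (h i j).hasFDerivAt)
  have H2 := H.hasDerivAt
  simpa using H2

lemma clm_pair_decomp {n : ℕ} (L : ((Fin n → ℝ) × ℝ) →L[ℝ] ℝ) (v : Fin n → ℝ) (c : ℝ) :
    L (v, c) = ∑ j, v j * L (Pi.single j 1, 0) + c * L (0, 1) := by
  have h1 : v = ∑ j, v j • (Pi.single j 1 : Fin n → ℝ) := by
    funext k
    simp [Finset.sum_apply, Pi.single_apply]
  have h2 : ((v, c) : (Fin n → ℝ) × ℝ)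
      = (∑ j, v j • ((Pi.single j 1 : Fin n → ℝ), (0 : ℝ))) + c • ((0 : Fin n → ℝ), (1 : ℝ)) := by
    refine Prod.ext ?_ ?_
    · simp only [Prod.fst_add, Prod.fst_sum, Prod.smul_fst, Prod.smul_snd, smul_eq_mul]
      rw [← h1]
      simp
    · simp [Prod.snd_sum]
  rw [h2, map_add, map_sum]
  simp only [map_smul, smul_eq_mul]

lemma final_algebra {n : ℕ} (P dA dD0 : ℝ)
    (A adj : Matrix (Fin n) (Fin n) ℝ)
    (dD1 Bv uv wv : Fin n → ℝ)
    (duel dwel : Fin n → Fin n → ℝ)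
    (Ee : Fin n → Fin n → ℝ) (Cc : Fin n → Fin n → Fin n → ℝ)
    (hAadj : ∀ l j, ∑ i, A l i * adj i j = if l = j then dA else 0)
    (hadjA : ∀ i m, ∑ j, adj i j * A j m = if i = m then dA else 0)
    (hC : ∀ i j k, Cc i j k = Cc i k j)
    (hcont : dD0 + ∑ i, (P * duel i i + uv i * dD1 i) = 0)
    (hrel : ∀ i, uv i = Bv i + ∑ j, A i j * wv j)
    (hrelD : ∀ i k, ∑ l, A l k * duel i l
      = Ee i k + ∑ j, (A i j * dwel j k + wv j * Cc i j k)) :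
    (∑ j, Bv j * dD1 j + dD0) * dA + P * (∑ i, ∑ j, adj i j * Ee j i)
      + ∑ k, (P * dA * dwel k k
          + wv k * (P * (∑ i, ∑ j, adj i j * Cc j i k) + dA * (∑ j, A j k * dD1 j))) = 0 := by
  have hEe : ∀ j i, Ee j i = ∑ l, A l i * duel j l
      - ∑ m, A j m * dwel m i - ∑ m, wv m * Cc j m i := by
    intro j i
    have h := hrelD j i
    rw [Finset.sum_add_distrib] at h
    linarith [h]
  have hT1 : ∑ i, ∑ j, adj i j * (∑ l, A l i * duel j l) = dA * ∑ j, duel j j := by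
    have h1 : ∀ i : Fin n, ∑ j, adj i j * (∑ l, A l i * duel j l)
        = ∑ j, ∑ l, (A l i * adj i j) * duel j l := by
      intro i
      refine Finset.sum_congr rfl fun j _ => ?_
      rw [Finset.mul_sum]
      exact Finset.sum_congr rfl fun l _ => by ring
    rw [Finset.sum_congr rfl fun i _ => h1 i]
    rw [Finset.sum_comm]
    have h2 : ∀ j : Fin n, ∑ i, ∑ l, (A l i * adj i j) * duel j l
        = ∑ l, (∑ i, A l i * adj i j) * duel j l := by
      intro j
      rw [Finset.sum_comm]
      exact Finset.sum_congr rfl fun l _ => by rw [Finset.sum_mul]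
    rw [Finset.sum_congr rfl fun j _ => h2 j]
    have h3 : ∀ j : Fin n, ∑ l, (∑ i, A l i * adj i j) * duel j l = dA * duel j j := by
      intro j
      have e : ∀ l : Fin n, (∑ i, A l i * adj i j) * duel j l
          = (if l = j then dA * duel j l else 0) := by
        intro l; rw [hAadj]; split <;> simp
      rw [Finset.sum_congr rfl fun l _ => e l, Finset.sum_ite_eq' Finset.univ j
        (fun l => dA * duel j l)]
      simp
    rw [Finset.sum_congr rfl fun j _ => h3 j, Finset.mul_sum]
  have hT2 : ∑ i, ∑ j, adj i j * (∑ m, A j m * dwel m i) = dA * ∑ i, dwel i i := by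
    have h1 : ∀ i : Fin n, ∑ j, adj i j * (∑ m, A j m * dwel m i)
        = ∑ m, (∑ j, adj i j * A j m) * dwel m i := by
      intro i
      have e : ∀ j : Fin n, adj i j * (∑ m, A j m * dwel m i)
          = ∑ m, (adj i j * A j m) * dwel m i := by
        intro j
        rw [Finset.mul_sum]
        exact Finset.sum_congr rfl fun m _ => by ring
      rw [Finset.sum_congr rfl fun j _ => e j, Finset.sum_comm]
      exact Finset.sum_congr rfl fun m _ => by rw [Finset.sum_mul]
    rw [Finset.sum_congr rfl fun i _ => h1 i]
    have h3 : ∀ i : Fin n, ∑ m, (∑ j, adj i j * A j m) * dwel m i = dA * dwel i i := by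
      intro i
      have e : ∀ m : Fin n, (∑ j, adj i j * A j m) * dwel m i
          = (if i = m then dA * dwel m i else 0) := by
        intro m; rw [hadjA]; split <;> simp
      rw [Finset.sum_congr rfl fun m _ => e m, Finset.sum_ite_eq Finset.univ i
        (fun m => dA * dwel m i)]
      simp
    rw [Finset.sum_congr rfl fun i _ => h3 i, Finset.mul_sum]
  have hT3 : ∑ i, ∑ j, adj i j * (∑ m, wv m * Cc j m i)
      = ∑ m, wv m * (∑ i, ∑ j, adj i j * Cc j i m) := by
    have h1 : ∀ i : Fin n, ∑ j, adj i j * (∑ m, wv m * Cc j m i)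
        = ∑ m, ∑ j, wv m * (adj i j * Cc j i m) := by
      intro i
      have e : ∀ j : Fin n, adj i j * (∑ m, wv m * Cc j m i)
          = ∑ m, wv m * (adj i j * Cc j i m) := by
        intro j
        rw [Finset.mul_sum]
        exact Finset.sum_congr rfl fun m _ => by rw [hC j m i]; ring
      rw [Finset.sum_congr rfl fun j _ => e j, Finset.sum_comm]
    rw [Finset.sum_congr rfl fun i _ => h1 i, Finset.sum_comm]
    refine Finset.sum_congr rfl fun m _ => ?_
    rw [Finset.mul_sum]
    refine Finset.sum_congr rfl fun i _ => ?_
    rw [Finset.mul_sum]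
  have hSE : (∑ i, ∑ j, adj i j * Ee j i)
      = dA * ∑ j, duel j j - dA * ∑ i, dwel i i
        - ∑ m, wv m * (∑ i, ∑ j, adj i j * Cc j i m) := by
    have e : ∀ i j : Fin n, adj i j * Ee j i
        = adj i j * (∑ l, A l i * duel j l) - adj i j * (∑ m, A j m * dwel m i)
          - adj i j * (∑ m, wv m * Cc j m i) := by
      intro i j; rw [hEe]; ring
    calc (∑ i, ∑ j, adj i j * Ee j i)
        = ∑ i, ∑ j, (adj i j * (∑ l, A l i * duel j l)
            - adj i j * (∑ m, A j m * dwel m i) - adj i j * (∑ m, wv m * Cc j m i)) := by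
          exact Finset.sum_congr rfl fun i _ => Finset.sum_congr rfl fun j _ => e i j
      _ = (∑ i, ∑ j, adj i j * (∑ l, A l i * duel j l))
            - (∑ i, ∑ j, adj i j * (∑ m, A j m * dwel m i))
            - (∑ i, ∑ j, adj i j * (∑ m, wv m * Cc j m i)) := by
          simp [Finset.sum_sub_distrib]
      _ = _ := by rw [hT1, hT2, hT3]
  have hsplit : ∑ k, (P * dA * dwel k k
        + wv k * (P * (∑ i, ∑ j, adj i j * Cc j i k) + dA * (∑ j, A j k * dD1 j)))
      = P * (dA * ∑ k, dwel k k) + P * (∑ k, wv k * (∑ i, ∑ j, adj i j * Cc j i k))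
        + dA * (∑ k, wv k * (∑ j, A j k * dD1 j)) := by
    rw [Finset.sum_congr rfl (fun k (_ : k ∈ Finset.univ) =>
      show P * dA * dwel k k + wv k * (P * (∑ i, ∑ j, adj i j * Cc j i k)
          + dA * (∑ j, A j k * dD1 j))
        = P * (dA * dwel k k) + P * (wv k * (∑ i, ∑ j, adj i j * Cc j i k))
          + dA * (wv k * (∑ j, A j k * dD1 j)) by ring)]
    simp [Finset.sum_add_distrib, Finset.mul_sum]
  have hswap : ∑ k, wv k * (∑ j, A j k * dD1 j)
      = ∑ j, (∑ k, A j k * wv k) * dD1 j := by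
    have e : ∀ k : Fin n, wv k * (∑ j, A j k * dD1 j)
        = ∑ j, (A j k * wv k) * dD1 j := by
      intro k
      rw [Finset.mul_sum]
      exact Finset.sum_congr rfl fun j _ => by ring
    rw [Finset.sum_congr rfl fun k _ => e k, Finset.sum_comm]
    exact Finset.sum_congr rfl fun j _ => by rw [Finset.sum_mul]
  have hu : ∑ j, uv j * dD1 j
      = ∑ j, Bv j * dD1 j + ∑ j, (∑ k, A j k * wv k) * dD1 j := by
    rw [← Finset.sum_add_distrib]
    exact Finset.sum_congr rfl fun j _ => by rw [hrel j]; ring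
  have hcont' : dD0 + (P * ∑ i, duel i i + ∑ i, uv i * dD1 i) = 0 := by
    rw [Finset.sum_add_distrib, ← Finset.mul_sum] at hcont
    linarith [hcont]
  linear_combination dA * hcont' + P * hSE + hsplit + dA * hswap - dA * hu

set_option maxHeartbeats 1000000 in
/-- **GLM continuity equation (deterministic core).**
If `D` satisfies the continuity equation `∂ₜD + div(D u) = 0` everywhere, then the
transformed density `D̃(x,t) = D(ψ(t,x),t) · det(Dₓψ(t,x))` satisfies the continuity
equation with the pulled-back velocity `w`, where `u(ψ(t,x),t) = ∂ₜψ(t,x) + Dₓψ(t,x)·w(x,t)`. -/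
theorem glm_continuity_equation
    {n : ℕ}
    (ψ η : ℝ → (Fin n → ℝ) → (Fin n → ℝ))
    (u w : (Fin n → ℝ) → ℝ → (Fin n → ℝ))
    (D : (Fin n → ℝ) → ℝ → ℝ)
    -- smoothness
    (hψ : ContDiff ℝ (⊤ : ℕ∞) (fun p : ℝ × (Fin n → ℝ) => ψ p.1 p.2))
    (hu : ContDiff ℝ (⊤ : ℕ∞) (fun p : (Fin n → ℝ) × ℝ => u p.1 p.2))
    (hw : ContDiff ℝ (⊤ : ℕ∞) (fun p : (Fin n → ℝ) × ℝ => w p.1 p.2))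
    (hD : ContDiff ℝ (⊤ : ℕ∞) (fun p : (Fin n → ℝ) × ℝ => D p.1 p.2))
    -- ψ(t,·) is a diffeomorphism of ℝⁿ for every t, with smooth inverse η(t,·)
    (hη : ContDiff ℝ (⊤ : ℕ∞) (fun p : ℝ × (Fin n → ℝ) => η p.1 p.2))
    (hψη : ∀ t x, ψ t (η t x) = x)
    (hηψ : ∀ t x, η t (ψ t x) = x)
    -- velocity relation : u(ψ(t,x),t) = ∂ₜψ(t,x) + Dₓψ(t,x)·w(x,t)
    (hrel : ∀ t x, u (ψ t x) t =
      (fun i => deriv (fun s => ψ s x i) t) + (jacobian (ψ t) x).mulVec (w x t))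
    -- continuity equation : ∂ₜD + div(D u) = 0
    (hcont : ∀ x t,
      deriv (fun s => D x s) t
        + ∑ i, fderiv ℝ (fun y => D y t * u y t i) x (Pi.single i 1) = 0) :
    -- conclusion : ∂ₜD̃ + div(D̃ w) = 0 for D̃(x,t) = D(ψ(t,x),t)·det(Dₓψ(t,x))
    ∀ x t,
      deriv (fun s => D (ψ s x) s * (jacobian (ψ s) x).det) t
        + ∑ i, fderiv ℝ
            (fun y => D (ψ t y) t * (jacobian (ψ t) y).det * w y t i) x
            (Pi.single i 1) = 0 := by
  intro x t
  classical
  -- component smoothness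
  have hle1 : ((⊤ : ℕ∞) : WithTop ℕ∞) ≠ 0 := by
    simp
  have hle2 : ((⊤ : ℕ∞) : WithTop ℕ∞) + 1 ≤ ((⊤ : ℕ∞) : WithTop ℕ∞) := by
    exact_mod_cast (le_of_eq (top_add 1) : (⊤ : ℕ∞) + 1 ≤ (⊤ : ℕ∞))
  have hψi : ∀ i : Fin n, ContDiff ℝ (⊤ : ℕ∞) (fun p : ℝ × (Fin n → ℝ) => ψ p.1 p.2 i) :=
    fun i => contDiff_pi.1 hψ i
  have hui : ∀ i : Fin n, ContDiff ℝ (⊤ : ℕ∞) (fun p : (Fin n → ℝ) × ℝ => u p.1 p.2 i) :=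
    fun i => contDiff_pi.1 hu i
  have hwi : ∀ i : Fin n, ContDiff ℝ (⊤ : ℕ∞) (fun p : (Fin n → ℝ) × ℝ => w p.1 p.2 i) :=
    fun i => contDiff_pi.1 hw i
  -- first spatial+time derivative of ψ components (joint)
  set g : Fin n → (ℝ × (Fin n → ℝ)) → ((ℝ × (Fin n → ℝ)) →L[ℝ] ℝ) :=
    fun i => fderiv ℝ (fun p : ℝ × (Fin n → ℝ) => ψ p.1 p.2 i) with hgdef
  have hgd : ∀ (i : Fin n) (p : ℝ × (Fin n → ℝ)),
      HasFDerivAt (fun q : ℝ × (Fin n → ℝ) => ψ q.1 q.2 i) (g i p) p := by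
    intro i p; rw [hgdef]
    exact (((hψi i).differentiable hle1) p).hasFDerivAt
  have hgsm : ∀ i, ContDiff ℝ (⊤ : ℕ∞) (g i) := by
    intro i; rw [hgdef]; exact (hψi i).fderiv_right hle2
  -- second derivative
  set f2 : Fin n → ((ℝ × (Fin n → ℝ)) →L[ℝ] ((ℝ × (Fin n → ℝ)) →L[ℝ] ℝ)) :=
    fun i => fderiv ℝ (g i) (t, x) with hf2def
  have hf2d : ∀ i, HasFDerivAt (g i) (f2 i) (t, x) := by
    intro i; rw [hf2def]
    exact (((hgsm i).differentiable hle1) (t, x)).hasFDerivAt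
  have hsymm : ∀ i v w', f2 i v w' = f2 i w' v :=
    fun i v w' => second_derivative_symmetric (fun p => hgd i p) (hf2d i) v w'
  -- jacobian entries via g
  have hA : ∀ (s : ℝ) (y : Fin n → ℝ) (i j : Fin n),
      jacobian (ψ s) y i j = g i (s, y) (0, Pi.single j 1) := by
    intro s y i j
    have h1 : HasFDerivAt (fun z : Fin n → ℝ => ψ s z i)
        ((g i (s, y)).comp (ContinuousLinearMap.inr ℝ ℝ (Fin n → ℝ))) y :=
      (hgd i (s, y)).comp y (hasFDerivAt_prodMk_right s y)
    simp only [jacobian]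
    rw [h1.fderiv]
    simp
  -- time derivative of ψ components via g
  have hB : ∀ (s : ℝ) (y : Fin n → ℝ) (i : Fin n),
      deriv (fun s' => ψ s' y i) s = g i (s, y) (1, 0) := by
    intro s y i
    have h2 : HasDerivAt (fun s' : ℝ => (s', y)) (((1:ℝ), (0 : Fin n → ℝ))) s :=
      HasDerivAt.prodMk (hasDerivAt_id s) (hasDerivAt_const s y)
    have h1 : HasDerivAt (fun s' => ψ s' y i) (g i (s, y) (1, 0)) s := by
      simpa [Function.comp_def] using (hgd i (s, y)).comp_hasDerivAt s h2
    exact h1.deriv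
  -- derivative of evaluation of g
  have haH : ∀ (i : Fin n) (h : ℝ × (Fin n → ℝ)),
      HasFDerivAt (fun p => g i p h)
        ((ContinuousLinearMap.apply ℝ ℝ h).comp (f2 i)) (t, x) := by
    intro i h
    simpa [Function.comp_def] using ((ContinuousLinearMap.apply ℝ ℝ h).hasFDerivAt).comp (t, x) (hf2d i)
  -- time derivative of jacobian entries
  have hcurve : HasDerivAt (fun s : ℝ => (s, x)) (((1:ℝ), (0 : Fin n → ℝ))) t :=
    HasDerivAt.prodMk (hasDerivAt_id t) (hasDerivAt_const t x)
  have hAt : ∀ i j, HasDerivAt (fun s => jacobian (ψ s) x i j)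
      (f2 i (1, 0) (0, Pi.single j 1)) t := by
    intro i j
    have h1 : HasDerivAt (fun s : ℝ => g i (s, x) (0, Pi.single j 1))
        (f2 i (1, 0) (0, Pi.single j 1)) t := by
      simpa [Function.comp_def] using (haH i (0, Pi.single j 1)).comp_hasDerivAt t hcurve
    have h2 : (fun s => jacobian (ψ s) x i j)
        = fun s : ℝ => g i (s, x) (0, Pi.single j 1) := funext fun s => hA s x i j
    rw [h2]; exact h1
  -- spatial derivative of jacobian entries
  have hCx : ∀ i j, HasFDerivAt (fun y => jacobian (ψ t) y i j)
      ((((ContinuousLinearMap.apply ℝ ℝ ((0:ℝ), Pi.single j 1)).comp (f2 i))).comp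
        (ContinuousLinearMap.inr ℝ ℝ (Fin n → ℝ))) x := by
    intro i j
    have h1 : HasFDerivAt (fun y : Fin n → ℝ => g i (t, y) (0, Pi.single j 1))
        ((((ContinuousLinearMap.apply ℝ ℝ ((0:ℝ), Pi.single j 1)).comp (f2 i))).comp
          (ContinuousLinearMap.inr ℝ ℝ (Fin n → ℝ))) x :=
      (haH i (0, Pi.single j 1)).comp x (hasFDerivAt_prodMk_right t x)
    have h2 : (fun y => jacobian (ψ t) y i j)
        = fun y : Fin n → ℝ => g i (t, y) (0, Pi.single j 1) := funext fun y => hA t y i j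
    rw [h2]; exact h1
  -- derivatives of D, u, w in the (space, time) variable
  set dD : ((Fin n → ℝ) × ℝ) →L[ℝ] ℝ :=
    fderiv ℝ (fun p : (Fin n → ℝ) × ℝ => D p.1 p.2) (ψ t x, t) with hdDdef
  have hDd : HasFDerivAt (fun p : (Fin n → ℝ) × ℝ => D p.1 p.2) dD (ψ t x, t) := by
    rw [hdDdef]; exact ((hD.differentiable hle1) (ψ t x, t)).hasFDerivAt
  set du : Fin n → (((Fin n → ℝ) × ℝ) →L[ℝ] ℝ) :=
    fun i => fderiv ℝ (fun p : (Fin n → ℝ) × ℝ => u p.1 p.2 i) (ψ t x, t) with hdudef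
  have hud : ∀ i, HasFDerivAt (fun p : (Fin n → ℝ) × ℝ => u p.1 p.2 i) (du i) (ψ t x, t) := by
    intro i; rw [hdudef]; exact (((hui i).differentiable hle1) (ψ t x, t)).hasFDerivAt
  set dw : Fin n → (((Fin n → ℝ) × ℝ) →L[ℝ] ℝ) :=
    fun j => fderiv ℝ (fun p : (Fin n → ℝ) × ℝ => w p.1 p.2 j) (x, t) with hdwdef
  have hwd : ∀ j, HasFDerivAt (fun p : (Fin n → ℝ) × ℝ => w p.1 p.2 j) (dw j) (x, t) := by
    intro j; rw [hdwdef]; exact (((hwi j).differentiable hle1) (x, t)).hasFDerivAt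
  -- the map y ↦ (ψ t y, t) and its derivative
  set Pm : (Fin n → ℝ) →L[ℝ] ((Fin n → ℝ) × ℝ) :=
    (ContinuousLinearMap.pi
      (fun i => (g i (t, x)).comp (ContinuousLinearMap.inr ℝ ℝ (Fin n → ℝ)))).prod 0 with hPmdef
  have hpair : HasFDerivAt (fun y : Fin n → ℝ => (ψ t y, t)) Pm x := by
    rw [hPmdef]
    exact HasFDerivAt.prodMk (hasFDerivAt_pi.2 fun i =>
      (hgd i (t, x)).comp x (hasFDerivAt_prodMk_right t x)) (hasFDerivAt_const t x)
  -- spatial factor derivatives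
  have hq1 : HasFDerivAt (fun y : Fin n → ℝ => D (ψ t y) t) (dD.comp Pm) x :=
    by have := hDd.comp x hpair; exact this
  have hq2 : HasFDerivAt (fun y : Fin n → ℝ => (jacobian (ψ t) y).det)
      (∑ i, ∑ j, (jacobian (ψ t) x).adjugate i j •
        ((((ContinuousLinearMap.apply ℝ ℝ ((0:ℝ), Pi.single i 1)).comp (f2 j))).comp
          (ContinuousLinearMap.inr ℝ ℝ (Fin n → ℝ)))) x :=
    hasFDerivAt_matrix_det (fun i j => hCx i j)
  have hq3 : ∀ k, HasFDerivAt (fun y : Fin n → ℝ => w y t k)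
      ((dw k).comp (ContinuousLinearMap.inl ℝ (Fin n → ℝ) ℝ)) x :=
    fun k => by have := (hwd k).comp x (hasFDerivAt_prodMk_left (𝕜 := ℝ) x t); exact this
  have Hk : ∀ k, HasFDerivAt
      (fun y => D (ψ t y) t * (jacobian (ψ t) y).det * w y t k)
      ((D (ψ t x) t * (jacobian (ψ t) x).det) •
          ((dw k).comp (ContinuousLinearMap.inl ℝ (Fin n → ℝ) ℝ))
        + (w x t k) • ((D (ψ t x) t) • (∑ i, ∑ j, (jacobian (ψ t) x).adjugate i j •
              ((((ContinuousLinearMap.apply ℝ ℝ ((0:ℝ), Pi.single i 1)).comp (f2 j))).comp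
                (ContinuousLinearMap.inr ℝ ℝ (Fin n → ℝ))))
            + ((jacobian (ψ t) x).det) • (dD.comp Pm))) x :=
    fun k => (hq1.mul hq2).mul (hq3 k)
  -- time derivative
  have hγ : HasDerivAt (fun s : ℝ => (ψ s x, s))
      (((fun i => g i (t, x) (1, 0)) : Fin n → ℝ), (1:ℝ)) t := by
    refine HasDerivAt.prodMk ?_ (hasDerivAt_id t)
    refine hasDerivAt_pi.2 fun i => ?_
    simpa [Function.comp_def] using (hgd i (t, x)).comp_hasDerivAt t hcurve
  have hD1 : HasDerivAt (fun s : ℝ => D (ψ s x) s)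
      (dD (((fun i => g i (t, x) (1, 0)) : Fin n → ℝ), (1:ℝ))) t := by
    exact hDd.comp_hasDerivAt_of_eq t hγ rfl
  have hdet1 : HasDerivAt (fun s : ℝ => (jacobian (ψ s) x).det)
      (∑ i, ∑ j, (jacobian (ψ t) x).adjugate i j * (f2 j (1, 0) (0, Pi.single i 1))) t :=
    hasDerivAt_matrix_det (fun i j => hAt i j)
  have hTime := (hD1.fun_mul hdet1).deriv
  -- rewrite hcont at (ψ t x, t)
  have hcont' : dD (0, 1)
      + ∑ i, (D (ψ t x) t * du i (Pi.single i 1, 0)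
          + u (ψ t x) t i * dD (Pi.single i 1, 0)) = 0 := by
    have hcz := hcont (ψ t x) t
    have e1 : deriv (fun s => D (ψ t x) s) t = dD (0, 1) := by
      have h2 : HasDerivAt (fun s : ℝ => ((ψ t x : Fin n → ℝ), s))
          (((0 : Fin n → ℝ), (1:ℝ))) t :=
        HasDerivAt.prodMk (hasDerivAt_const t (ψ t x)) (hasDerivAt_id t)
      have h1 : HasDerivAt (fun s => D (ψ t x) s) (dD (0, 1)) t :=
        hDd.comp_hasDerivAt_of_eq t h2 rfl
      exact h1.deriv
    have e2 : ∀ i, fderiv ℝ (fun y => D y t * u y t i) (ψ t x) (Pi.single i 1)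
        = D (ψ t x) t * du i (Pi.single i 1, 0)
          + u (ψ t x) t i * dD (Pi.single i 1, 0) := by
      intro i
      have hq : HasFDerivAt (fun y : Fin n → ℝ => D y t)
          (dD.comp (ContinuousLinearMap.inl ℝ (Fin n → ℝ) ℝ)) (ψ t x) :=
        by have := hDd.comp (ψ t x) (hasFDerivAt_prodMk_left (𝕜 := ℝ) (ψ t x) t); exact this
      have hqu : HasFDerivAt (fun y : Fin n → ℝ => u y t i)
          ((du i).comp (ContinuousLinearMap.inl ℝ (Fin n → ℝ) ℝ)) (ψ t x) :=
        by have := (hud i).comp (ψ t x) (hasFDerivAt_prodMk_left (𝕜 := ℝ) (ψ t x) t); exact this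
      rw [(hq.fun_mul hqu).fderiv]
      simp
    rw [e1] at hcz
    rw [Finset.sum_congr rfl (fun i _ => e2 i)] at hcz
    exact hcz
  -- rewrite hrel at (t, x)
  have hrel' : ∀ i, u (ψ t x) t i
      = g i (t, x) (1, 0) + ∑ j, jacobian (ψ t) x i j * w x t j := by
    intro i
    have h := congrFun (hrel t x) i
    rw [h]
    simp only [Pi.add_apply]
    rw [hB t x i]
    rfl
  -- differentiated velocity relation
  have hrelD' : ∀ i k, ∑ l, jacobian (ψ t) x l k * du i (Pi.single l 1, 0)
      = f2 i (1, 0) (0, Pi.single k 1)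
        + ∑ j, (jacobian (ψ t) x i j * dw j (Pi.single k 1, 0)
            + w x t j * f2 i (0, Pi.single k 1) (0, Pi.single j 1)) := by
    intro i k
    have hF1 : HasFDerivAt (fun y : Fin n → ℝ => u (ψ t y) t i) ((du i).comp Pm) x :=
      by have := (hud i).comp x hpair; exact this
    have hb : HasFDerivAt (fun y : Fin n → ℝ => g i (t, y) ((1:ℝ), (0 : Fin n → ℝ)))
        ((((ContinuousLinearMap.apply ℝ ℝ ((1:ℝ), (0 : Fin n → ℝ))).comp (f2 i))).comp
          (ContinuousLinearMap.inr ℝ ℝ (Fin n → ℝ))) x :=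
      (haH i ((1:ℝ), (0 : Fin n → ℝ))).comp x (hasFDerivAt_prodMk_right t x)
    have hterm : ∀ j, HasFDerivAt
        (fun y : Fin n → ℝ => g i (t, y) (0, Pi.single j 1) * w y t j)
        ((g i (t, x) (0, Pi.single j 1)) •
            ((dw j).comp (ContinuousLinearMap.inl ℝ (Fin n → ℝ) ℝ))
          + (w x t j) • ((((ContinuousLinearMap.apply ℝ ℝ ((0:ℝ), Pi.single j 1)).comp
              (f2 i))).comp (ContinuousLinearMap.inr ℝ ℝ (Fin n → ℝ)))) x := by
      intro j
      exact HasFDerivAt.mul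
        ((haH i ((0:ℝ), Pi.single j 1)).comp x (hasFDerivAt_prodMk_right t x)) (hq3 j)
    have hF2 : HasFDerivAt (fun y : Fin n → ℝ =>
        g i (t, y) ((1:ℝ), (0 : Fin n → ℝ)) + ∑ j, g i (t, y) (0, Pi.single j 1) * w y t j)
        (((((ContinuousLinearMap.apply ℝ ℝ ((1:ℝ), (0 : Fin n → ℝ))).comp (f2 i))).comp
            (ContinuousLinearMap.inr ℝ ℝ (Fin n → ℝ)))
          + ∑ j, ((g i (t, x) (0, Pi.single j 1)) •
              ((dw j).comp (ContinuousLinearMap.inl ℝ (Fin n → ℝ) ℝ))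
            + (w x t j) • ((((ContinuousLinearMap.apply ℝ ℝ ((0:ℝ), Pi.single j 1)).comp
                (f2 i))).comp (ContinuousLinearMap.inr ℝ ℝ (Fin n → ℝ))))) x :=
      hb.add (HasFDerivAt.fun_sum (fun j _ => hterm j))
    have hfeq : (fun y : Fin n → ℝ => u (ψ t y) t i)
        = (fun y : Fin n → ℝ =>
            g i (t, y) ((1:ℝ), (0 : Fin n → ℝ))
              + ∑ j, g i (t, y) (0, Pi.single j 1) * w y t j) := by
      funext y
      have h := congrFun (hrel t y) i
      rw [h]
      simp only [Pi.add_apply]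
      rw [hB t y i]
      congr 1
      simp [Matrix.mulVec, dotProduct, hA]
    have hF1' : HasFDerivAt (fun y : Fin n → ℝ =>
        g i (t, y) ((1:ℝ), (0 : Fin n → ℝ)) + ∑ j, g i (t, y) (0, Pi.single j 1) * w y t j)
        ((du i).comp Pm) x := hfeq ▸ hF1
    have hueq := hF1'.unique hF2
    have h5 := congrFun (congrArg (fun (L : (Fin n → ℝ) →L[ℝ] ℝ) => (L : (Fin n → ℝ) → ℝ))
      hueq) (Pi.single k 1)
    simp only [ContinuousLinearMap.coe_comp', Function.comp_apply, ContinuousLinearMap.add_apply,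
      ContinuousLinearMap.sum_apply, ContinuousLinearMap.smul_apply, smul_eq_mul,
      ContinuousLinearMap.apply_apply, ContinuousLinearMap.inr_apply,
      ContinuousLinearMap.inl_apply] at h5
    -- h5 : du i (Pm (single k 1)) = f2 i (0,single k 1) (1,0) + ∑ j (...)
    rw [hPmdef] at h5
    simp only [ContinuousLinearMap.prod_apply, ContinuousLinearMap.zero_apply] at h5
    rw [clm_pair_decomp (du i) _ 0] at h5
    simp only [ContinuousLinearMap.pi_apply, ContinuousLinearMap.coe_comp',
      Function.comp_apply, ContinuousLinearMap.inr_apply, zero_mul, add_zero] at h5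
    have h6 : ∀ l : Fin n, g l (t, x) ((0 : ℝ), Pi.single k 1) * du i (Pi.single l 1, 0)
        = jacobian (ψ t) x l k * du i (Pi.single l 1, 0) :=
      fun l => by rw [← hA t x l k]
    rw [Finset.sum_congr rfl (fun l _ => h6 l)] at h5
    rw [h5, hsymm i (0, Pi.single k 1) (1, 0)]
    refine congrArg _ (Finset.sum_congr rfl (fun j _ => ?_))
    rw [← hA t x i j]
  -- assemble
  have hAadj : ∀ l j, (∑ i, jacobian (ψ t) x l i * (jacobian (ψ t) x).adjugate i j)
      = if l = j then (jacobian (ψ t) x).det else 0 := by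
    intro l j
    have h := congrFun (congrFun (Matrix.mul_adjugate (jacobian (ψ t) x)) l) j
    simpa [Matrix.mul_apply, Matrix.one_apply, mul_ite] using h
  have hadjA : ∀ i m, (∑ j, (jacobian (ψ t) x).adjugate i j * jacobian (ψ t) x j m)
      = if i = m then (jacobian (ψ t) x).det else 0 := by
    intro i m
    have h := congrFun (congrFun (Matrix.adjugate_mul (jacobian (ψ t) x)) i) m
    simpa [Matrix.mul_apply, Matrix.one_apply, mul_ite] using h
  have hCsym : ∀ (i j k : Fin n),
      f2 i (0, Pi.single k 1) (0, Pi.single j 1) = f2 i (0, Pi.single j 1) (0, Pi.single k 1) :=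
    fun i j k => hsymm i _ _
  have FA := final_algebra (D (ψ t x) t) ((jacobian (ψ t) x).det) (dD (0, 1))
    (jacobian (ψ t) x) ((jacobian (ψ t) x).adjugate)
    (fun j => dD (Pi.single j 1, 0)) (fun i => g i (t, x) (1, 0))
    (fun i => u (ψ t x) t i) (fun k => w x t k)
    (fun i j => du i (Pi.single j 1, 0)) (fun j k => dw j (Pi.single k 1, 0))
    (fun i j => f2 i (1, 0) (0, Pi.single j 1))
    (fun i j k => f2 i (0, Pi.single k 1) (0, Pi.single j 1))
    hAadj hadjA hCsym hcont' hrel' hrelD'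
  -- rewrite the goal
  rw [hTime]
  have hSp : ∀ k, fderiv ℝ (fun y => D (ψ t y) t * (jacobian (ψ t) y).det * w y t k) x
      (Pi.single k 1)
      = D (ψ t x) t * (jacobian (ψ t) x).det * dw k (Pi.single k 1, 0)
        + w x t k * (D (ψ t x) t *
            (∑ i, ∑ j, (jacobian (ψ t) x).adjugate i j *
              f2 j (0, Pi.single k 1) (0, Pi.single i 1))
          + (jacobian (ψ t) x).det * (∑ j, jacobian (ψ t) x j k * dD (Pi.single j 1, 0))) := by
    intro k
    rw [(Hk k).fderiv]
    simp only [ContinuousLinearMap.add_apply, ContinuousLinearMap.smul_apply, smul_eq_mul,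
      ContinuousLinearMap.coe_comp', Function.comp_apply, ContinuousLinearMap.sum_apply,
      ContinuousLinearMap.apply_apply, ContinuousLinearMap.inr_apply,
      ContinuousLinearMap.inl_apply]
    rw [hPmdef]
    simp only [ContinuousLinearMap.coe_comp', Function.comp_apply,
      ContinuousLinearMap.prod_apply, ContinuousLinearMap.zero_apply]
    rw [clm_pair_decomp dD _ 0]
    simp only [ContinuousLinearMap.pi_apply, ContinuousLinearMap.coe_comp',
      Function.comp_apply, ContinuousLinearMap.inr_apply, zero_mul, add_zero]
    have h6 : ∀ l : Fin n, g l (t, x) ((0 : ℝ), Pi.single k 1) * dD (Pi.single l 1, 0)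
        = jacobian (ψ t) x l k * dD (Pi.single l 1, 0) :=
      fun l => by rw [← hA t x l k]
    rw [Finset.sum_congr rfl (fun l _ => h6 l)]
  rw [Finset.sum_congr rfl (fun k _ => hSp k)]
  rw [clm_pair_decomp dD _ 1]
  simp only [one_mul]
  linear_combination FA
end
end

section
/- GLM advection of a covariant symmetric tensor (mean Cauchy–Green strain). Suppose S : ℝⁿ × ℝ → (symmetric n×n real matrices) is smooth and satisfies the covariant advection law ∂ₜS_{ab} + u^k ∂_k S_{ab} + S_{kb} ∂_a u^k + S_{ka} ∂_b u^k = 0 everywhere. Then the pulled-back tensor S̃(x,t) := (Dₓψ(t,x))ᵀ · S(ψ(t,x), t) · Dₓψ(t,x) satisfies the same advection law with w in place of u: ∂ₜS̃_{ab} + w^k ∂_k S̃_{ab} + S̃_{kb} ∂_a w^k + S̃_{ka} ∂_b w^k = 0 everywhere. -/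
open scoped BigOperators
open Matrix

noncomputable section

/-- The covariant advection operator applied to a time-dependent matrix field `S`
with velocity `u` at the point `(x,t)` and entry `(a,b)`:
`∂ₜS_{ab} + u^k ∂_k S_{ab} + S_{kb} ∂_a u^k + S_{ka} ∂_b u^k` (summation over `k`). -/
def covAdvect {n : ℕ} (u : (Fin n → ℝ) → ℝ → (Fin n → ℝ))
    (S : (Fin n → ℝ) → ℝ → Matrix (Fin n) (Fin n) ℝ)
    (x : Fin n → ℝ) (t : ℝ) (a b : Fin n) : ℝ :=
  deriv (fun s => S x s a b) t
    + ∑ k, u x t k * fderiv ℝ (fun y => S y t a b) x (Pi.single k 1)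
    + ∑ k, S x t k b * fderiv ℝ (fun y => u y t k) x (Pi.single a 1)
    + ∑ k, S x t k a * fderiv ℝ (fun y => u y t k) x (Pi.single b 1)

section AuxLemmas

variable {n : ℕ}



/-- directional derivative of time-slice in terms of full fderiv, for t-first functions -/
lemma deriv_slice_t {F : ℝ × (Fin n → ℝ) → ℝ} {t : ℝ} {x : Fin n → ℝ}
    (hF : DifferentiableAt ℝ F (t, x)) :
    deriv (fun s => F (s, x)) t = fderiv ℝ F (t, x) (1, 0) := by
  have h : HasFDerivAt (fun s : ℝ => F (s, x))
      ((fderiv ℝ F (t, x)).comp (ContinuousLinearMap.inl ℝ ℝ (Fin n → ℝ))) t :=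
    hF.hasFDerivAt.comp t (hasFDerivAt_prodMk_left t x)
  rw [h.hasDerivAt.deriv]
  simp

lemma fderiv_slice_x {F : ℝ × (Fin n → ℝ) → ℝ} {t : ℝ} {x : Fin n → ℝ}
    (hF : DifferentiableAt ℝ F (t, x)) (v : Fin n → ℝ) :
    fderiv ℝ (fun y => F (t, y)) x v = fderiv ℝ F (t, x) (0, v) := by
  have h : HasFDerivAt (fun y => F (t, y))
      ((fderiv ℝ F (t, x)).comp (ContinuousLinearMap.inr ℝ ℝ (Fin n → ℝ))) x :=
    hF.hasFDerivAt.comp x (hasFDerivAt_prodMk_right t x)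
  rw [h.fderiv]
  simp

/-- versions for x-first functions -/
lemma deriv_slice_t' {F : (Fin n → ℝ) × ℝ → ℝ} {t : ℝ} {x : Fin n → ℝ}
    (hF : DifferentiableAt ℝ F (x, t)) :
    deriv (fun s => F (x, s)) t = fderiv ℝ F (x, t) (0, 1) := by
  have h : HasFDerivAt (fun s : ℝ => F (x, s))
      ((fderiv ℝ F (x, t)).comp (ContinuousLinearMap.inr ℝ (Fin n → ℝ) ℝ)) t :=
    hF.hasFDerivAt.comp t (hasFDerivAt_prodMk_right x t)
  rw [h.hasDerivAt.deriv]
  simp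

lemma fderiv_slice_x' {F : (Fin n → ℝ) × ℝ → ℝ} {t : ℝ} {x : Fin n → ℝ}
    (hF : DifferentiableAt ℝ F (x, t)) (v : Fin n → ℝ) :
    fderiv ℝ (fun y => F (y, t)) x v = fderiv ℝ F (x, t) (v, 0) := by
  have h : HasFDerivAt (fun y => F (y, t))
      ((fderiv ℝ F (x, t)).comp (ContinuousLinearMap.inl ℝ (Fin n → ℝ) ℝ)) x :=
    hF.hasFDerivAt.comp x (hasFDerivAt_prodMk_left x t)
  rw [h.fderiv]
  simp

/-- basis expansion of a continuous linear map on ℝⁿ -/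
lemma clm_expand (L : (Fin n → ℝ) →L[ℝ] ℝ) (v : Fin n → ℝ) :
    L v = ∑ m, v m * L (Pi.single m 1) := by
  conv_lhs => rw [← Finset.univ_sum_single v]
  rw [map_sum]
  refine Finset.sum_congr rfl fun m _ => ?_
  have : (Pi.single m (v m) : Fin n → ℝ) = (v m) • (Pi.single m (1:ℝ) : Fin n → ℝ) := by
    rw [← Pi.single_smul, smul_eq_mul, mul_one]
  rw [this, L.map_smul, smul_eq_mul]

/-- Schwarz / symmetry of second derivatives for smooth functions -/
lemma schwarz {E : Type*} [NormedAddCommGroup E] [NormedSpace ℝ E]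
    {F : E → ℝ} (hF : ContDiff ℝ (⊤ : ℕ∞) F) (q : E) (v w : E) :
    fderiv ℝ (fun p => fderiv ℝ F p v) q w = fderiv ℝ (fun p => fderiv ℝ F p w) q v := by
  have hd : ∀ p, HasFDerivAt F (fderiv ℝ F p) p :=
    fun p => (hF.differentiable (by simp) p).hasFDerivAt
  have hd2 : ContDiff ℝ (⊤ : ℕ∞) (fderiv ℝ F) := hF.fderiv_right (by exact_mod_cast le_top)
  have hd2' : HasFDerivAt (fderiv ℝ F) (fderiv ℝ (fderiv ℝ F) q) q :=
    (hd2.differentiable (by simp) q).hasFDerivAt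
  have hsym := second_derivative_symmetric hd hd2' v w
  have e1 : ∀ z : E, fderiv ℝ (fun p => fderiv ℝ F p z) q = (fderiv ℝ (fderiv ℝ F) q).flip z := by
    intro z
    have := fderiv_clm_apply (hd2.differentiable (by simp) q) (differentiableAt_const z)
    simpa using this
  rw [e1 v, e1 w]
  simpa using hsym.symm



lemma clm_expand_tx (L : (ℝ × (Fin n → ℝ)) →L[ℝ] ℝ) (s : ℝ) (v : Fin n → ℝ) :
    L (s, v) = s * L (1, 0) + ∑ m, v m * L (0, Pi.single m 1) := by
  have h1 : ((s, v) : ℝ × (Fin n → ℝ)) = s • ((1:ℝ), (0 : Fin n → ℝ)) + ((0:ℝ), v) := by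
    simp [Prod.ext_iff]
  rw [h1, map_add, L.map_smul, smul_eq_mul]
  congr 1
  have h2 : ∀ z : Fin n → ℝ, L ((0:ℝ), z) = (L.comp (ContinuousLinearMap.inr ℝ ℝ (Fin n → ℝ))) z := by
    intro z; simp
  rw [h2, clm_expand]
  simp

lemma clm_expand_xt (L : ((Fin n → ℝ) × ℝ) →L[ℝ] ℝ) (v : Fin n → ℝ) (s : ℝ) :
    L (v, s) = (∑ m, v m * L (Pi.single m 1, 0)) + s * L (0, 1) := by
  have h1 : ((v, s) : (Fin n → ℝ) × ℝ) = ((v, (0:ℝ)) : (Fin n → ℝ) × ℝ) + s • ((0 : Fin n → ℝ), (1:ℝ)) := by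
    simp [Prod.ext_iff]
  rw [h1, map_add, L.map_smul, smul_eq_mul]
  congr 1
  have h2 : ∀ z : Fin n → ℝ, L (z, (0:ℝ)) = (L.comp (ContinuousLinearMap.inl ℝ (Fin n → ℝ) ℝ)) z := by
    intro z; simp
  rw [h2, clm_expand]
  simp

lemma sum3_comm23 (f : Fin n → Fin n → Fin n → ℝ) :
    ∑ l, ∑ k, ∑ m, f l k m = ∑ l, ∑ k, ∑ m, f l m k :=
  Finset.sum_congr rfl fun _ _ => Finset.sum_comm

lemma sum3_comm13 (f : Fin n → Fin n → Fin n → ℝ) :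
    ∑ l, ∑ k, ∑ m, f l k m = ∑ l, ∑ k, ∑ m, f m k l := by
  calc ∑ l, ∑ k, ∑ m, f l k m = ∑ k, ∑ l, ∑ m, f l k m := Finset.sum_comm
    _ = ∑ k, ∑ m, ∑ l, f l k m := Finset.sum_congr rfl fun _ _ => Finset.sum_comm
    _ = ∑ m, ∑ k, ∑ l, f l k m := Finset.sum_comm

lemma sum3_comm_out (f : Fin n → Fin n → Fin n → ℝ) :
    ∑ l, ∑ k, ∑ m, f l k m = ∑ m, ∑ l, ∑ k, f l k m := by
  calc ∑ l, ∑ k, ∑ m, f l k m = ∑ l, ∑ m, ∑ k, f l k m :=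
        Finset.sum_congr rfl fun _ _ => Finset.sum_comm
    _ = ∑ m, ∑ l, ∑ k, f l k m := Finset.sum_comm

lemma final_algebra_s2 (J Sg Du Dw : Fin n → Fin n → ℝ)
    (hsym : ∀ l k, Sg l k = Sg k l) (a b : Fin n) :
    (∑ l, ∑ k, ((∑ m, J m a * Du m l - ∑ d, J l d * Dw a d) * Sg l k * J k b
      + J l a * (-(∑ m, Sg m k * Du l m) - ∑ m, Sg m l * Du k m) * J k b
      + J l a * Sg l k * (∑ m, J m b * Du m k - ∑ d, J k d * Dw b d)))
    + (∑ c, (∑ l, ∑ k, J l c * Sg l k * J k b) * Dw a c)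
    + (∑ c, (∑ l, ∑ k, J l c * Sg l k * J k a) * Dw b c) = 0 := by
  -- split the big double sum into six triple sums
  have hsplit : ∀ l k : Fin n,
      ((∑ m, J m a * Du m l - ∑ d, J l d * Dw a d) * Sg l k * J k b
      + J l a * (-(∑ m, Sg m k * Du l m) - ∑ m, Sg m l * Du k m) * J k b
      + J l a * Sg l k * (∑ m, J m b * Du m k - ∑ d, J k d * Dw b d))
      = (∑ m, J m a * Du m l * Sg l k * J k b)
        - (∑ d, J l d * Dw a d * Sg l k * J k b)
        - (∑ m, J l a * (Sg m k * Du l m) * J k b)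
        - (∑ m, J l a * (Sg m l * Du k m) * J k b)
        + (∑ m, J l a * Sg l k * (J m b * Du m k))
        - (∑ d, J l a * Sg l k * (J k d * Dw b d)) := by
    intro l k
    simp only [sub_mul, mul_sub, neg_sub, neg_mul, mul_neg, sub_eq_add_neg, mul_add, add_mul,
      Finset.sum_mul, Finset.mul_sum, Finset.sum_add_distrib, Finset.sum_neg_distrib]
    ring
  simp only [hsplit]
  simp only [Finset.sum_sub_distrib, Finset.sum_add_distrib]
  have h13 : (∑ l, ∑ k, ∑ m, J m a * Du m l * Sg l k * J k b)
      = ∑ l, ∑ k, ∑ m, J l a * (Sg m k * Du l m) * J k b := by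
    have h := sum3_comm13 (f := fun l k m => J l a * (Sg m k * Du l m) * J k b)
    rw [h]
    exact Finset.sum_congr rfl fun l _ => Finset.sum_congr rfl fun k _ =>
      Finset.sum_congr rfl fun m _ => by ring
  have h45 : (∑ l, ∑ k, ∑ m, J l a * Sg l k * (J m b * Du m k))
      = ∑ l, ∑ k, ∑ m, J l a * (Sg m l * Du k m) * J k b := by
    have h := sum3_comm23 (f := fun l k m => J l a * Sg l k * (J m b * Du m k))
    rw [h]
    exact Finset.sum_congr rfl fun l _ => Finset.sum_congr rfl fun k _ =>
      Finset.sum_congr rfl fun m _ => by rw [hsym l m]; ring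
  have h27 : (∑ l, ∑ k, ∑ d, J l d * Dw a d * Sg l k * J k b)
      = ∑ c, (∑ l, ∑ k, J l c * Sg l k * J k b) * Dw a c := by
    have h := sum3_comm_out (f := fun l k d => J l d * Dw a d * Sg l k * J k b)
    rw [h]
    refine Finset.sum_congr rfl fun c _ => ?_
    rw [Finset.sum_mul]
    refine Finset.sum_congr rfl fun l _ => ?_
    rw [Finset.sum_mul]
    exact Finset.sum_congr rfl fun k _ => by ring
  have h68 : (∑ l, ∑ k, ∑ d, J l a * Sg l k * (J k d * Dw b d))
      = ∑ c, (∑ l, ∑ k, J l c * Sg l k * J k a) * Dw b c := by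
    have h := sum3_comm_out (f := fun l k d => J l a * Sg l k * (J k d * Dw b d))
    rw [h]
    refine Finset.sum_congr rfl fun c _ => ?_
    have h2 := Finset.sum_comm (s := Finset.univ) (t := Finset.univ)
      (f := fun l k => J l a * Sg l k * (J k c * Dw b c))
    rw [h2, Finset.sum_mul]
    exact Finset.sum_congr rfl fun l _ => by
      rw [Finset.sum_mul]
      exact Finset.sum_congr rfl fun k _ => by rw [hsym k l]; ring
  linarith [h13, h45, h27, h68]


/-- component function of the flow map on the full space-time domain -/
def psiC {n : ℕ} (ψ : ℝ → (Fin n → ℝ) → (Fin n → ℝ)) (l : Fin n) :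
    ℝ × (Fin n → ℝ) → ℝ := fun p => ψ p.1 p.2 l

/-- pulled back tensor entry as a function on the full space-time domain -/
def Gfun {n : ℕ} (ψ : ℝ → (Fin n → ℝ) → (Fin n → ℝ))
    (S : (Fin n → ℝ) → ℝ → Matrix (Fin n) (Fin n) ℝ) (a b : Fin n)
    (p : ℝ × (Fin n → ℝ)) : ℝ :=
  ∑ l, ∑ k, fderiv ℝ (psiC ψ l) p (0, Pi.single a 1)
      * S (ψ p.1 p.2) p.1 l k
      * fderiv ℝ (psiC ψ k) p (0, Pi.single b 1)

end AuxLemmas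

/-- **GLM advection of a covariant symmetric tensor (mean Cauchy–Green strain).**
If the symmetric tensor field `S` satisfies the covariant advection law with
velocity `u`, then the pulled-back tensor `S̃ = (Dₓψ)ᵀ · S(ψ) · Dₓψ` satisfies the
same advection law with the pulled-back velocity `w`. -/
theorem glm_covariant_tensor_advection
    {n : ℕ}
    (ψ η : ℝ → (Fin n → ℝ) → (Fin n → ℝ))
    (u w : (Fin n → ℝ) → ℝ → (Fin n → ℝ))
    (S : (Fin n → ℝ) → ℝ → Matrix (Fin n) (Fin n) ℝ)
    -- smoothness
    (hψ : ContDiff ℝ (⊤ : ℕ∞) (fun p : ℝ × (Fin n → ℝ) => ψ p.1 p.2))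
    (hu : ContDiff ℝ (⊤ : ℕ∞) (fun p : (Fin n → ℝ) × ℝ => u p.1 p.2))
    (hw : ContDiff ℝ (⊤ : ℕ∞) (fun p : (Fin n → ℝ) × ℝ => w p.1 p.2))
    (hS : ∀ a b, ContDiff ℝ (⊤ : ℕ∞) (fun p : (Fin n → ℝ) × ℝ => S p.1 p.2 a b))
    -- S is symmetric
    (hSsym : ∀ x t, (S x t)ᵀ = S x t)
    -- ψ(t,·) is a diffeomorphism of ℝⁿ for every t, with smooth inverse η(t,·)
    (hη : ContDiff ℝ (⊤ : ℕ∞) (fun p : ℝ × (Fin n → ℝ) => η p.1 p.2))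
    (hψη : ∀ t x, ψ t (η t x) = x)
    (hηψ : ∀ t x, η t (ψ t x) = x)
    -- velocity relation : u(ψ(t,x),t) = ∂ₜψ(t,x) + Dₓψ(t,x)·w(x,t)
    (hrel : ∀ t x, u (ψ t x) t =
      (fun i => deriv (fun s => ψ s x i) t) + (jacobian (ψ t) x).mulVec (w x t))
    -- covariant advection law for S with velocity u
    (hadv : ∀ x t a b, covAdvect u S x t a b = 0) :
    -- conclusion : S̃ = (Dₓψ)ᵀ · S(ψ) · Dₓψ satisfies the advection law with w
    ∀ x t a b,
      covAdvect w
        (fun y s => (jacobian (ψ s) y)ᵀ * S (ψ s y) s * jacobian (ψ s) y)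
        x t a b = 0 := by
  intro x t a b
  have htop : ((⊤ : ℕ∞) : WithTop ℕ∞) ≠ 0 := by simp
  -- componentwise smoothness
  have hψe : ∀ l, ContDiff ℝ (⊤ : ℕ∞) (psiC ψ l) := fun l => contDiff_pi.mp hψ l
  have hue : ∀ l, ContDiff ℝ (⊤ : ℕ∞) (fun p : (Fin n → ℝ) × ℝ => u p.1 p.2 l) :=
    fun l => contDiff_pi.mp hu l
  have hwe : ∀ l, ContDiff ℝ (⊤ : ℕ∞) (fun p : (Fin n → ℝ) × ℝ => w p.1 p.2 l) :=
    fun l => contDiff_pi.mp hw l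
  have hA : ∀ (l : Fin n) (v : ℝ × (Fin n → ℝ)),
      ContDiff ℝ (⊤ : ℕ∞) (fun p => fderiv ℝ (psiC ψ l) p v) :=
    fun l v => ((hψe l).fderiv_right (by exact_mod_cast le_top)).clm_apply contDiff_const
  -- jacobian entries as full-space derivatives
  have hJ : ∀ (s : ℝ) (z : Fin n → ℝ) (l c : Fin n),
      jacobian (ψ s) z l c = fderiv ℝ (psiC ψ l) (s, z) (0, Pi.single c 1) := by
    intro s z l c
    have h := fderiv_slice_x (F := psiC ψ l)
      ((hψe l).differentiable htop (s, z)) (Pi.single c 1)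
    simpa [jacobian, psiC] using h
  -- velocity relation, componentwise, via full-space derivatives
  have hrel' : ∀ (s : ℝ) (z : Fin n → ℝ) (l : Fin n),
      fderiv ℝ (psiC ψ l) (s, z) (1, 0)
        = u (ψ s z) s l
          - ∑ c, w z s c * fderiv ℝ (psiC ψ l) (s, z) (0, Pi.single c 1) := by
    intro s z l
    have hT : deriv (fun s' => ψ s' z l) s = fderiv ℝ (psiC ψ l) (s, z) (1, 0) :=
      deriv_slice_t (F := psiC ψ l) ((hψe l).differentiable htop (s, z))
    have h := congrFun (hrel s z) l
    simp only [Pi.add_apply] at h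
    have hmv : (jacobian (ψ s) z).mulVec (w z s) l
        = ∑ c, w z s c * fderiv ℝ (psiC ψ l) (s, z) (0, Pi.single c 1) := by
      simp only [Matrix.mulVec, dotProduct, hJ]
      exact Finset.sum_congr rfl fun c _ => mul_comm _ _
    rw [← hT]
    rw [hmv] at h
    linarith [h]
  -- directional derivative of flow components in direction (1, w x t)
  have hDV : ∀ (s : ℝ) (z : Fin n → ℝ) (l : Fin n),
      fderiv ℝ (psiC ψ l) (s, z) (1, w x t)
        = (u (ψ s z) s l - ∑ c, w z s c * fderiv ℝ (psiC ψ l) (s, z) (0, Pi.single c 1))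
          + ∑ c, w x t c * fderiv ℝ (psiC ψ l) (s, z) (0, Pi.single c 1) := by
    intro s z l
    rw [clm_expand_tx (fderiv ℝ (psiC ψ l) (s, z)) 1 (w x t), hrel' s z l]
    ring
  have hDVq : ∀ l : Fin n,
      fderiv ℝ (psiC ψ l) (t, x) (1, w x t) = u (ψ t x) t l := by
    intro l; rw [hDV t x l]; ring
  -- chain rule helper : the map p ↦ (ψ p.1 p.2, p.1)
  have hgFD : HasFDerivAt (fun p : ℝ × (Fin n → ℝ) => (ψ p.1 p.2, p.1))
      ((fderiv ℝ (fun p : ℝ × (Fin n → ℝ) => ψ p.1 p.2) (t, x)).prod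
        (ContinuousLinearMap.fst ℝ ℝ (Fin n → ℝ))) (t, x) :=
    ((hψ.differentiable htop (t, x)).hasFDerivAt).prodMk hasFDerivAt_fst
  have hpi : fderiv ℝ (fun p : ℝ × (Fin n → ℝ) => ψ p.1 p.2) (t, x)
      = ContinuousLinearMap.pi (fun m => fderiv ℝ (psiC ψ m) (t, x)) :=
    fderiv_pi (fun m => (hψe m).differentiable htop (t, x))
  -- (a) derivative of p ↦ u (ψ p.1 p.2) p.1 l in a spatial coordinate direction
  have ha : ∀ (c l : Fin n),
      fderiv ℝ (fun p : ℝ × (Fin n → ℝ) => u (ψ p.1 p.2) p.1 l) (t, x) (0, Pi.single c 1)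
        = ∑ m, fderiv ℝ (psiC ψ m) (t, x) (0, Pi.single c 1)
            * fderiv ℝ (fun z => u z t l) (ψ t x) (Pi.single m 1) := by
    intro c l
    have hcomp : HasFDerivAt (fun p : ℝ × (Fin n → ℝ) => u (ψ p.1 p.2) p.1 l)
        ((fderiv ℝ (fun pr : (Fin n → ℝ) × ℝ => u pr.1 pr.2 l) (ψ t x, t)).comp
          ((fderiv ℝ (fun p : ℝ × (Fin n → ℝ) => ψ p.1 p.2) (t, x)).prod
            (ContinuousLinearMap.fst ℝ ℝ (Fin n → ℝ)))) (t, x) :=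
      by have h := (((hue l).differentiable htop (ψ t x, t)).hasFDerivAt).comp (t, x) hgFD; exact h
    rw [hcomp.fderiv]
    simp only [ContinuousLinearMap.comp_apply, ContinuousLinearMap.prod_apply,
      ContinuousLinearMap.coe_fst']
    have hx' := fderiv_slice_x' (F := fun pr : (Fin n → ℝ) × ℝ => u pr.1 pr.2 l)
      ((hue l).differentiable htop (ψ t x, t))
      (fderiv ℝ (fun p : ℝ × (Fin n → ℝ) => ψ p.1 p.2) (t, x) (0, Pi.single c 1))
    simp only at hx'
    rw [← hx', clm_expand]
    refine Finset.sum_congr rfl fun m _ => ?_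
    rw [hpi]
    simp [ContinuousLinearMap.pi_apply]
  -- keyB : advected derivative of the jacobian entries
  have keyB : ∀ (c l : Fin n),
      fderiv ℝ (fun p : ℝ × (Fin n → ℝ) => fderiv ℝ (psiC ψ l) p (0, Pi.single c 1))
          (t, x) (1, w x t)
        = (∑ m, fderiv ℝ (psiC ψ m) (t, x) (0, Pi.single c 1)
              * fderiv ℝ (fun z => u z t l) (ψ t x) (Pi.single m 1))
          - ∑ d, fderiv ℝ (psiC ψ l) (t, x) (0, Pi.single d 1)
              * fderiv ℝ (fun z => w z t d) x (Pi.single c 1) := by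
    intro c l
    rw [schwarz (hψe l) (t, x) (0, Pi.single c 1) (1, w x t)]
    have hfun : (fun p : ℝ × (Fin n → ℝ) => fderiv ℝ (psiC ψ l) p (1, w x t))
        = fun p => (u (ψ p.1 p.2) p.1 l
            - ∑ d, w p.2 p.1 d * fderiv ℝ (psiC ψ l) p (0, Pi.single d 1))
          + ∑ d, w x t d * fderiv ℝ (psiC ψ l) p (0, Pi.single d 1) := by
      funext p
      obtain ⟨s, z⟩ := p
      exact hDV s z l
    rw [hfun]
    have hUdiff : ContDiff ℝ (⊤ : ℕ∞) (fun p : ℝ × (Fin n → ℝ) => u (ψ p.1 p.2) p.1 l) :=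
      (hue l).comp (hψ.prodMk contDiff_fst)
    have hW1 : ∀ d, ContDiff ℝ (⊤ : ℕ∞) (fun p : ℝ × (Fin n → ℝ) => w p.2 p.1 d) :=
      fun d => (hwe d).comp (contDiff_snd.prodMk contDiff_fst)
    have hS1 : ContDiff ℝ (⊤ : ℕ∞)
        (fun p : ℝ × (Fin n → ℝ) => ∑ d, w p.2 p.1 d * fderiv ℝ (psiC ψ l) p (0, Pi.single d 1)) :=
      ContDiff.sum fun d _ => (hW1 d).mul (hA l _)
    have hS2 : ContDiff ℝ (⊤ : ℕ∞)
        (fun p : ℝ × (Fin n → ℝ) => ∑ d, w x t d * fderiv ℝ (psiC ψ l) p (0, Pi.single d 1)) :=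
      ContDiff.sum fun d _ => contDiff_const.mul (hA l _)
    rw [fderiv_fun_add (((hUdiff.sub hS1).differentiable htop (t, x)))
        ((hS2.differentiable htop (t, x))),
      fderiv_fun_sub ((hUdiff.differentiable htop (t, x))) ((hS1.differentiable htop (t, x)))]
    simp only [ContinuousLinearMap.add_apply, ContinuousLinearMap.coe_sub', Pi.sub_apply]
    rw [ha c l]
    -- derivative of the frozen sum
    have hfr : fderiv ℝ
        (fun p : ℝ × (Fin n → ℝ) => ∑ d, w x t d * fderiv ℝ (psiC ψ l) p (0, Pi.single d 1))
        (t, x) (0, Pi.single c 1)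
        = ∑ d, w x t d
            * fderiv ℝ (fun p => fderiv ℝ (psiC ψ l) p (0, Pi.single d 1)) (t, x)
                (0, Pi.single c 1) := by
      rw [fderiv_fun_sum (fun d _ => (contDiff_const.mul (hA l (0, Pi.single d 1))).differentiable
        htop (t, x))]
      simp only [ContinuousLinearMap.coe_sum', Finset.sum_apply]
      refine Finset.sum_congr rfl fun d _ => ?_
      rw [fderiv_const_mul ((hA l (0, Pi.single d 1)).differentiable htop (t, x))]
      simp
    -- derivative of the moving sum
    have hmov : fderiv ℝ
        (fun p : ℝ × (Fin n → ℝ) => ∑ d, w p.2 p.1 d * fderiv ℝ (psiC ψ l) p (0, Pi.single d 1))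
        (t, x) (0, Pi.single c 1)
        = ∑ d, (fderiv ℝ (fun z => w z t d) x (Pi.single c 1)
              * fderiv ℝ (psiC ψ l) (t, x) (0, Pi.single d 1)
            + w x t d
              * fderiv ℝ (fun p => fderiv ℝ (psiC ψ l) p (0, Pi.single d 1)) (t, x)
                  (0, Pi.single c 1)) := by
      rw [fderiv_fun_sum (fun d _ => ((hW1 d).mul (hA l (0, Pi.single d 1))).differentiable
        htop (t, x))]
      simp only [ContinuousLinearMap.coe_sum', Finset.sum_apply]
      refine Finset.sum_congr rfl fun d _ => ?_
      rw [fderiv_fun_mul (((hW1 d)).differentiable htop (t, x))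
        ((hA l (0, Pi.single d 1)).differentiable htop (t, x))]
      -- derivative of p ↦ w p.2 p.1 d in direction (0, single c 1)
      have hwd : fderiv ℝ (fun p : ℝ × (Fin n → ℝ) => w p.2 p.1 d) (t, x) (0, Pi.single c 1)
          = fderiv ℝ (fun z => w z t d) x (Pi.single c 1) := by
        have hsw : HasFDerivAt (fun p : ℝ × (Fin n → ℝ) => (p.2, p.1))
            ((ContinuousLinearMap.snd ℝ ℝ (Fin n → ℝ)).prod
              (ContinuousLinearMap.fst ℝ ℝ (Fin n → ℝ))) (t, x) :=
          hasFDerivAt_snd.prodMk hasFDerivAt_fst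
        have hcomp : HasFDerivAt (fun p : ℝ × (Fin n → ℝ) => w p.2 p.1 d)
            ((fderiv ℝ (fun pr : (Fin n → ℝ) × ℝ => w pr.1 pr.2 d) (x, t)).comp
              ((ContinuousLinearMap.snd ℝ ℝ (Fin n → ℝ)).prod
                (ContinuousLinearMap.fst ℝ ℝ (Fin n → ℝ)))) (t, x) :=
          by have h := (((hwe d).differentiable htop (x, t)).hasFDerivAt).comp (t, x) hsw; exact h
        rw [hcomp.fderiv]
        have hx' := fderiv_slice_x' (F := fun pr : (Fin n → ℝ) × ℝ => w pr.1 pr.2 d)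
          ((hwe d).differentiable htop (x, t)) (Pi.single c 1)
        simp only [ContinuousLinearMap.comp_apply, ContinuousLinearMap.prod_apply,
          ContinuousLinearMap.coe_snd', ContinuousLinearMap.coe_fst']
        simp only at hx'
        rw [← hx']
      simp only [ContinuousLinearMap.add_apply, ContinuousLinearMap.coe_smul',
        Pi.smul_apply, smul_eq_mul]
      rw [hwd]
      ring
    rw [hmov, hfr, Finset.sum_add_distrib]
    ring_nf
    congr 1
    exact Finset.sum_congr rfl fun d _ => mul_comm _ _
  -- keyC : advected derivative of the composed tensor entries
  have keyC : ∀ l k : Fin n,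
      fderiv ℝ (fun p : ℝ × (Fin n → ℝ) => S (ψ p.1 p.2) p.1 l k) (t, x) (1, w x t)
        = -(∑ m, S (ψ t x) t m k * fderiv ℝ (fun z => u z t m) (ψ t x) (Pi.single l 1))
          - ∑ m, S (ψ t x) t m l * fderiv ℝ (fun z => u z t m) (ψ t x) (Pi.single k 1) := by
    intro l k
    have hcomp : HasFDerivAt (fun p : ℝ × (Fin n → ℝ) => S (ψ p.1 p.2) p.1 l k)
        ((fderiv ℝ (fun pr : (Fin n → ℝ) × ℝ => S pr.1 pr.2 l k) (ψ t x, t)).comp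
          ((fderiv ℝ (fun p : ℝ × (Fin n → ℝ) => ψ p.1 p.2) (t, x)).prod
            (ContinuousLinearMap.fst ℝ ℝ (Fin n → ℝ)))) (t, x) :=
      by have h := (((hS l k).differentiable htop (ψ t x, t)).hasFDerivAt).comp (t, x) hgFD; exact h
    rw [hcomp.fderiv]
    simp only [ContinuousLinearMap.comp_apply, ContinuousLinearMap.prod_apply,
      ContinuousLinearMap.coe_fst']
    have hvec : fderiv ℝ (fun p : ℝ × (Fin n → ℝ) => ψ p.1 p.2) (t, x) (1, w x t)
        = u (ψ t x) t := by
      funext m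
      rw [hpi]
      simpa using hDVq m
    rw [hvec]

    rw [clm_expand_xt (fderiv ℝ (fun pr : (Fin n → ℝ) × ℝ => S pr.1 pr.2 l k) (ψ t x, t))
      (u (ψ t x) t) 1]
    have hsx : ∀ m : Fin n,
        fderiv ℝ (fun pr : (Fin n → ℝ) × ℝ => S pr.1 pr.2 l k) (ψ t x, t) (Pi.single m 1, 0)
          = fderiv ℝ (fun z => S z t l k) (ψ t x) (Pi.single m 1) := by
      intro m
      have h := fderiv_slice_x' (F := fun pr : (Fin n → ℝ) × ℝ => S pr.1 pr.2 l k)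
        ((hS l k).differentiable htop (ψ t x, t)) (Pi.single m 1)
      simp only at h
      exact h.symm
    have hst : fderiv ℝ (fun pr : (Fin n → ℝ) × ℝ => S pr.1 pr.2 l k) (ψ t x, t) (0, 1)
        = deriv (fun s => S (ψ t x) s l k) t := by
      have h := deriv_slice_t' (F := fun pr : (Fin n → ℝ) × ℝ => S pr.1 pr.2 l k)
        ((hS l k).differentiable htop (ψ t x, t))
      simp only at h
      exact h.symm
    simp only [hsx, hst]
    have h := hadv (ψ t x) t l k
    simp only [covAdvect] at h
    linarith [h]
  -- smoothness of composed tensor entries and of Gfun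
  have hCdiff : ∀ l k : Fin n,
      ContDiff ℝ (⊤ : ℕ∞) (fun p : ℝ × (Fin n → ℝ) => S (ψ p.1 p.2) p.1 l k) :=
    fun l k => (hS l k).comp (hψ.prodMk contDiff_fst)
  have hGsm : ∀ a' b' : Fin n, ContDiff ℝ (⊤ : ℕ∞) (Gfun ψ S a' b') := by
    intro a' b'
    unfold Gfun
    exact ContDiff.sum fun l _ => ContDiff.sum fun k _ =>
      ((hA l _).mul (hCdiff l k)).mul (hA k _)
  -- the pulled-back tensor entries equal Gfun
  have hGeq : ∀ (a' b' : Fin n) (s : ℝ) (z : Fin n → ℝ),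
      ((jacobian (ψ s) z)ᵀ * S (ψ s z) s * jacobian (ψ s) z) a' b' = Gfun ψ S a' b' (s, z) := by
    intro a' b' s z
    unfold Gfun
    simp only [Matrix.mul_apply, Matrix.transpose_apply, Finset.sum_mul, hJ]
    exact Finset.sum_comm
  -- symmetry of the tensor at the point
  have hsym : ∀ l k : Fin n, S (ψ t x) t l k = S (ψ t x) t k l := by
    intro l k
    conv_lhs => rw [← hSsym (ψ t x) t]
    exact Matrix.transpose_apply _ l k
  -- derivative of each product term of Gfun
  have hterm : ∀ l k : Fin n,
      fderiv ℝ (fun p : ℝ × (Fin n → ℝ) =>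
          fderiv ℝ (psiC ψ l) p (0, Pi.single a 1) * S (ψ p.1 p.2) p.1 l k
            * fderiv ℝ (psiC ψ k) p (0, Pi.single b 1)) (t, x) (1, w x t)
        = fderiv ℝ (fun p => fderiv ℝ (psiC ψ l) p (0, Pi.single a 1)) (t, x) (1, w x t)
              * S (ψ t x) t l k * fderiv ℝ (psiC ψ k) (t, x) (0, Pi.single b 1)
          + fderiv ℝ (psiC ψ l) (t, x) (0, Pi.single a 1)
              * fderiv ℝ (fun p : ℝ × (Fin n → ℝ) => S (ψ p.1 p.2) p.1 l k) (t, x) (1, w x t)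
              * fderiv ℝ (psiC ψ k) (t, x) (0, Pi.single b 1)
          + fderiv ℝ (psiC ψ l) (t, x) (0, Pi.single a 1) * S (ψ t x) t l k
              * fderiv ℝ (fun p => fderiv ℝ (psiC ψ k) p (0, Pi.single b 1)) (t, x)
                  (1, w x t) := by
    intro l k
    rw [fderiv_fun_mul (((hA l (0, Pi.single a 1)).mul (hCdiff l k)).differentiable htop (t, x))
      ((hA k (0, Pi.single b 1)).differentiable htop (t, x))]
    simp only [ContinuousLinearMap.add_apply, ContinuousLinearMap.coe_smul',
      Pi.smul_apply, smul_eq_mul]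
    rw [fderiv_fun_mul ((hA l (0, Pi.single a 1)).differentiable htop (t, x))
      ((hCdiff l k).differentiable htop (t, x))]
    simp only [ContinuousLinearMap.add_apply, ContinuousLinearMap.coe_smul',
      Pi.smul_apply, smul_eq_mul]
    ring
  -- derivative of Gfun in the advection direction
  have hDG : fderiv ℝ (Gfun ψ S a b) (t, x) (1, w x t)
      = ∑ l, ∑ k,
          (fderiv ℝ (fun p => fderiv ℝ (psiC ψ l) p (0, Pi.single a 1)) (t, x) (1, w x t)
              * S (ψ t x) t l k * fderiv ℝ (psiC ψ k) (t, x) (0, Pi.single b 1)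
            + fderiv ℝ (psiC ψ l) (t, x) (0, Pi.single a 1)
              * fderiv ℝ (fun p : ℝ × (Fin n → ℝ) => S (ψ p.1 p.2) p.1 l k) (t, x) (1, w x t)
              * fderiv ℝ (psiC ψ k) (t, x) (0, Pi.single b 1)
            + fderiv ℝ (psiC ψ l) (t, x) (0, Pi.single a 1) * S (ψ t x) t l k
              * fderiv ℝ (fun p => fderiv ℝ (psiC ψ k) p (0, Pi.single b 1)) (t, x)
                  (1, w x t)) := by
    unfold Gfun
    rw [fderiv_fun_sum (fun l _ => (ContDiff.sum fun k _ =>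
      ((hA l (0, Pi.single a 1)).mul (hCdiff l k)).mul
        (hA k (0, Pi.single b 1))).differentiable htop (t, x))]
    simp only [ContinuousLinearMap.coe_sum', Finset.sum_apply]
    refine Finset.sum_congr rfl fun l _ => ?_
    rw [fderiv_fun_sum (fun k _ => (((hA l (0, Pi.single a 1)).mul (hCdiff l k)).mul
      (hA k (0, Pi.single b 1))).differentiable htop (t, x))]
    simp only [ContinuousLinearMap.coe_sum', Finset.sum_apply]
    exact Finset.sum_congr rfl fun k _ => hterm l k
  -- assemble
  simp only [covAdvect, hGeq]
  rw [deriv_slice_t ((hGsm a b).differentiable htop (t, x))]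
  have hsp : ∀ c : Fin n, fderiv ℝ (fun z => Gfun ψ S a b (t, z)) x (Pi.single c 1)
      = fderiv ℝ (Gfun ψ S a b) (t, x) (0, Pi.single c 1) :=
    fun c => fderiv_slice_x ((hGsm a b).differentiable htop (t, x)) _
  simp only [hsp]
  have hcomb : fderiv ℝ (Gfun ψ S a b) (t, x) (1, 0)
      + ∑ c, w x t c * fderiv ℝ (Gfun ψ S a b) (t, x) (0, Pi.single c 1)
      = fderiv ℝ (Gfun ψ S a b) (t, x) (1, w x t) := by
    rw [clm_expand_tx (fderiv ℝ (Gfun ψ S a b) (t, x)) 1 (w x t)]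
    ring
  rw [hcomb, hDG]
  simp only [keyB, keyC]
  unfold Gfun
  exact final_algebra_s2 (fun l c => fderiv ℝ (psiC ψ l) (t, x) (0, Pi.single c 1))
    (fun l k => S (ψ t x) t l k)
    (fun m l => fderiv ℝ (fun z => u z t l) (ψ t x) (Pi.single m 1))
    (fun c d => fderiv ℝ (fun z => w z t d) x (Pi.single c 1)) hsym a b
end
end

section
/- Variation of an advected density (the D′-equation). In the two-parameter family setup, suppose D : ℝⁿ × ℝ × ℝ → ℝ is smooth and satisfies D(φ(t,ε,x₀), t, ε) · det(D_{x₀}φ(t,ε,x₀)) = D₀(x₀) for all (t,ε,x₀), where D₀ : ℝⁿ → ℝ is smooth and D_{x₀}φ is the Jacobian of φ with respect to x₀. Then at every point (x,t,ε): ∂D/∂t + div(D u) = 0 and ∂D/∂ε + div(D ξ) = 0. -/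
open scoped BigOperators

noncomputable section

private lemma le_top1 : (1 : WithTop ℕ∞) ≤ ((⊤:ℕ∞) : WithTop ℕ∞) := by exact_mod_cast le_top
private lemma le_top2 : (2 : WithTop ℕ∞) ≤ ((⊤:ℕ∞) : WithTop ℕ∞) := by
  rw [show ((2:WithTop ℕ∞)) = ((2:ℕ∞):WithTop ℕ∞) by rfl]; exact_mod_cast le_top
private lemma le_top_add : ((⊤:ℕ∞) : WithTop ℕ∞) + 1 ≤ ((⊤:ℕ∞) : WithTop ℕ∞) := by
  exact_mod_cast (by simp : (⊤:ℕ∞) + 1 ≤ (⊤:ℕ∞))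

/-- expand a continuous linear functional on `Fin n → ℝ` along coordinates -/
private lemma clm_apply_eq_sum {n : ℕ} (L : (Fin n → ℝ) →L[ℝ] ℝ) (v : Fin n → ℝ) :
    L v = ∑ k, v k * L (Pi.single k 1) := by
  have hv : v = ∑ k, v k • (Pi.single k 1 : Fin n → ℝ) := by
    conv_lhs => rw [← Finset.univ_sum_single v]
    refine Finset.sum_congr rfl fun k _ => ?_
    rw [← Pi.single_smul, smul_eq_mul, mul_one]
  conv_lhs => rw [hv]
  rw [map_sum]
  refine Finset.sum_congr rfl fun k _ => ?_
  rw [map_smul, smul_eq_mul]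

private lemma fderiv_comp_pi_apply {n m : ℕ} {G : (Fin n → ℝ) → (Fin m → ℝ)} {x : Fin n → ℝ}
    (hG : DifferentiableAt ℝ G x) (k : Fin m) (w : Fin n → ℝ) :
    fderiv ℝ (fun y => G y k) x w = fderiv ℝ G x w k := by
  have h : HasFDerivAt (fun y => G y k)
      ((ContinuousLinearMap.proj k : (Fin m → ℝ) →L[ℝ] ℝ).comp (fderiv ℝ G x)) x :=
    (ContinuousLinearMap.proj k : (Fin m → ℝ) →L[ℝ] ℝ).hasFDerivAt.comp x hG.hasFDerivAt
  rw [h.fderiv]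
  rfl

section Slice
variable {X Y F : Type*} [NormedAddCommGroup X] [NormedSpace ℝ X]
  [NormedAddCommGroup Y] [NormedSpace ℝ Y] [NormedAddCommGroup F] [NormedSpace ℝ F]

private lemma fderiv_slice_left {f : X × Y → F} {a : X} {b : Y}
    (hf : DifferentiableAt ℝ f (a, b)) (v : X) :
    fderiv ℝ (fun z => f (z, b)) a v = fderiv ℝ f (a, b) (v, 0) := by
  have h : HasFDerivAt (fun z : X => f (z, b))
      ((fderiv ℝ f (a, b)).comp ((ContinuousLinearMap.id ℝ X).prod 0)) a :=
    hf.hasFDerivAt.comp a (HasFDerivAt.prodMk (hasFDerivAt_id a) (hasFDerivAt_const b a))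
  rw [h.fderiv]
  simp

private lemma fderiv_slice_right {f : X × Y → F} {a : X} {b : Y}
    (hf : DifferentiableAt ℝ f (a, b)) (v : Y) :
    fderiv ℝ (fun z => f (a, z)) b v = fderiv ℝ f (a, b) (0, v) := by
  have h : HasFDerivAt (fun z : Y => f (a, z))
      ((fderiv ℝ f (a, b)).comp (((0 : Y →L[ℝ] X)).prod (ContinuousLinearMap.id ℝ Y))) b :=
    hf.hasFDerivAt.comp b (HasFDerivAt.prodMk (hasFDerivAt_const a b) (hasFDerivAt_id b))
  rw [h.fderiv]
  simp

private lemma deriv_slice_fst {f : ℝ × Y → F} {a : ℝ} {b : Y}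
    (hf : DifferentiableAt ℝ f (a, b)) :
    deriv (fun s => f (s, b)) a = fderiv ℝ f (a, b) (1, 0) := by
  rw [← fderiv_apply_one_eq_deriv, fderiv_slice_left hf 1]

private lemma deriv_slice_snd {f : X × ℝ → F} {a : X} {b : ℝ}
    (hf : DifferentiableAt ℝ f (a, b)) :
    deriv (fun s => f (a, s)) b = fderiv ℝ f (a, b) (0, 1) := by
  rw [← fderiv_apply_one_eq_deriv, fderiv_slice_right hf 1]

end Slice

/-- Jacobi-type formula: derivative of determinant of a matrix-valued function. -/
private lemma det_deriv_eq {n : ℕ} (At A' : Matrix (Fin n) (Fin n) ℝ) :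
    ∑ σ : Equiv.Perm (Fin n), ((Equiv.Perm.sign σ : ℤ) : ℝ) *
        ∑ i, (∏ j ∈ Finset.univ.erase i, At (σ j) j) * A' (σ i) i
      = ∑ i, (At.updateRow i (A' i)).det := by
  simp_rw [Matrix.det_apply']
  rw [Finset.sum_comm]
  refine Finset.sum_congr rfl fun σ _ => ?_
  rw [Finset.mul_sum]
  rw [← Equiv.sum_comp σ
    (fun r => ((Equiv.Perm.sign σ : ℤ) : ℝ) * ∏ j, (At.updateRow r (A' r)) (σ j) j)]
  refine Finset.sum_congr rfl fun i _ => ?_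
  congr 1
  rw [← Finset.mul_prod_erase Finset.univ _ (Finset.mem_univ i)]
  have h1 : ∀ j ∈ Finset.univ.erase i,
      (At.updateRow (σ i) (A' (σ i))) (σ j) j = At (σ j) j := by
    intro j hj
    have hji : j ≠ i := (Finset.mem_erase.mp hj).1
    rw [Matrix.updateRow_ne (σ.injective.ne hji)]
  rw [Finset.prod_congr rfl h1]
  simp [Matrix.updateRow_self, mul_comm]

private lemma hasDerivAt_det' {n : ℕ} {A : ℝ → Matrix (Fin n) (Fin n) ℝ}
    {A' : Matrix (Fin n) (Fin n) ℝ} {t : ℝ}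
    (h : ∀ i j, HasDerivAt (fun s => A s i j) (A' i j) t) :
    HasDerivAt (fun s => (A s).det) (∑ i, ((A t).updateRow i (A' i)).det) t := by
  have key : HasDerivAt
      (fun s => ∑ σ : Equiv.Perm (Fin n), ((Equiv.Perm.sign σ : ℤ) : ℝ) * ∏ i, A s (σ i) i)
      (∑ σ : Equiv.Perm (Fin n), ((Equiv.Perm.sign σ : ℤ) : ℝ) *
        ∑ i, (∏ j ∈ Finset.univ.erase i, A t (σ j) j) * A' (σ i) i) t := by
    refine HasDerivAt.fun_sum fun σ _ => ?_
    have hp : HasDerivAt (fun s => ∏ i, A s (σ i) i)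
        (∑ i, (∏ j ∈ Finset.univ.erase i, A t (σ j) j) • A' (σ i) i) t :=
      HasDerivAt.fun_finsetProd fun i _ => h (σ i) i
    simpa [smul_eq_mul] using hp.const_mul (((Equiv.Perm.sign σ : ℤ) : ℝ))
  have hfun : (fun s => ∑ σ : Equiv.Perm (Fin n),
      ((Equiv.Perm.sign σ : ℤ) : ℝ) * ∏ i, A s (σ i) i) = fun s => (A s).det := by
    funext s; rw [Matrix.det_apply']
  rw [hfun, det_deriv_eq (A t) A'] at key
  exact key

private lemma sum_det_updateRow {n : ℕ} (J A : Matrix (Fin n) (Fin n) ℝ) :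
    ∑ i, (J.updateRow i (fun j => ∑ k, A i k * J k j)).det = (∑ i, A i i) * J.det := by
  have h : ∀ i : Fin n, (fun j => ∑ k, A i k * J k j) = ∑ k, A i k • J k := by
    intro i; funext j; simp [Finset.sum_apply]
  calc ∑ i, (J.updateRow i (fun j => ∑ k, A i k * J k j)).det
      = ∑ i, A i i • J.det := by
        refine Finset.sum_congr rfl fun i _ => ?_
        rw [h i, Matrix.det_updateRow_sum]
    _ = (∑ i, A i i) * J.det := by rw [← Finset.sum_smul, smul_eq_mul]

private lemma key_aux {n : ℕ}
    (ψ : ℝ → (Fin n → ℝ) → (Fin n → ℝ))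
    (w : (Fin n → ℝ) → ℝ → (Fin n → ℝ))
    (Dd : (Fin n → ℝ) → ℝ → ℝ) (D₀ : (Fin n → ℝ) → ℝ)
    (hψ : ContDiff ℝ (⊤:ℕ∞) (fun p : ℝ × (Fin n → ℝ) => ψ p.1 p.2))
    (hw : ContDiff ℝ (⊤:ℕ∞) (fun p : (Fin n → ℝ) × ℝ => w p.1 p.2))
    (hDd : ContDiff ℝ (⊤:ℕ∞) (fun p : (Fin n → ℝ) × ℝ => Dd p.1 p.2))
    (hflow : ∀ s y i, deriv (fun s' => ψ s' y i) s = w (ψ s y) s i)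
    (hmass : ∀ s y, Dd (ψ s y) s * (jacobian (ψ s) y).det = D₀ y)
    (t : ℝ) (x₀ x : Fin n → ℝ) (hx : ψ t x₀ = x)
    (hdet : (jacobian (ψ t) x₀).det ≠ 0) :
    deriv (fun s => Dd x s) t
      + ∑ i, fderiv ℝ (fun y => Dd y t * w y t i) x (Pi.single i 1) = 0 := by
  classical
  subst hx
  set X := ψ t x₀ with hX
  -- basic differentiability
  have hψd : Differentiable ℝ (fun p : ℝ × (Fin n → ℝ) => ψ p.1 p.2) := hψ.differentiable (by simp)
  have hwd : Differentiable ℝ (fun p : (Fin n → ℝ) × ℝ => w p.1 p.2) := hw.differentiable (by simp)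
  have hDdd : Differentiable ℝ (fun p : (Fin n → ℝ) × ℝ => Dd p.1 p.2) := hDd.differentiable (by simp)
  have hψslice : ∀ s : ℝ, ContDiff ℝ (⊤:ℕ∞) (ψ s) :=
    fun s => hψ.comp (contDiff_const.prodMk contDiff_id)
  have hwslice : ∀ (s : ℝ) (i : Fin n), ContDiff ℝ (⊤:ℕ∞) (fun z => w z s i) :=
    fun s i => contDiff_pi.1 (hw.comp (contDiff_id.prodMk contDiff_const)) i
  have hDslice : ContDiff ℝ (⊤:ℕ∞) (fun y => Dd y t) := hDd.comp (contDiff_id.prodMk contDiff_const)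
  -- A = gradient matrix of w at X
  set A : Matrix (Fin n) (Fin n) ℝ :=
    (fun i k => fderiv ℝ (fun z => w z t i) X (Pi.single k 1)) with hA
  -- Step 1 : derivative of the Jacobian entries
  have entry : ∀ i j, HasDerivAt (fun s => jacobian (ψ s) x₀ i j)
      (∑ k, A i k * jacobian (ψ t) x₀ k j) t := by
    intro i j
    set f : ℝ × (Fin n → ℝ) → ℝ := fun p => ψ p.1 p.2 i with hfdef
    have hfC : ContDiff ℝ (⊤:ℕ∞) f := contDiff_pi.1 hψ i
    have hfd : Differentiable ℝ f := hfC.differentiable (by simp)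
    have hF : ContDiff ℝ (⊤:ℕ∞) (fderiv ℝ f) := hfC.fderiv_right le_top_add
    have hFd : Differentiable ℝ (fderiv ℝ f) := hF.differentiable (by simp)
    set u₀ : ℝ × (Fin n → ℝ) := ((0:ℝ), Pi.single j 1) with hu₀
    -- jacobian entry as full fderiv
    have hJf : ∀ s : ℝ, jacobian (ψ s) x₀ i j = fderiv ℝ f (s, x₀) u₀ :=
      fun s => fderiv_slice_right (hfd (s, x₀)) (Pi.single j 1)
    -- fderiv in time direction is w ∘ ψ
    have hg : ∀ p : ℝ × (Fin n → ℝ), fderiv ℝ f p (1, 0) = w (ψ p.1 p.2) p.1 i := by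
      rintro ⟨s, y⟩
      rw [← deriv_slice_fst (hfd (s, y))]
      exact hflow s y i
    -- apply-CLM chain
    have happ : ∀ (v u : ℝ × (Fin n → ℝ)),
        fderiv ℝ (fun p => fderiv ℝ f p u) (t, x₀) v = fderiv ℝ (fderiv ℝ f) (t, x₀) v u := by
      intro v u
      have h1 : HasFDerivAt (fun p => fderiv ℝ f p u)
          ((ContinuousLinearMap.apply ℝ ℝ u).comp (fderiv ℝ (fderiv ℝ f) (t, x₀))) (t, x₀) :=
        (ContinuousLinearMap.apply ℝ ℝ u).hasFDerivAt.comp (t, x₀) (hFd (t, x₀)).hasFDerivAt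
      rw [h1.fderiv]
      rfl
    -- differentiability of p ↦ fderiv f p u₀
    have hGdiff : Differentiable ℝ (fun p : ℝ × (Fin n → ℝ) => fderiv ℝ f p u₀) :=
      fun p => ((ContinuousLinearMap.apply ℝ ℝ u₀).differentiableAt).comp p (hFd p)
    -- the curve derivative
    have hDer : HasDerivAt (fun s => fderiv ℝ f (s, x₀) u₀)
        (fderiv ℝ (fun p : ℝ × (Fin n → ℝ) => fderiv ℝ f p u₀) (t, x₀) (1, 0)) t :=
      HasFDerivAt.comp_hasDerivAt (f := fun s => (s, x₀))
        (l := fun p : ℝ × (Fin n → ℝ) => fderiv ℝ f p u₀) t (hGdiff (t, x₀)).hasFDerivAt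
        (HasDerivAt.prodMk (hasDerivAt_id' t) (hasDerivAt_const t x₀))
    -- symmetry of second derivative
    have hsymm : fderiv ℝ (fderiv ℝ f) (t, x₀) ((1:ℝ), (0:Fin n → ℝ)) u₀
        = fderiv ℝ (fderiv ℝ f) (t, x₀) u₀ ((1:ℝ), (0:Fin n → ℝ)) :=
      (hfC.contDiffAt.isSymmSndFDerivAt (by rw [minSmoothness_of_isRCLikeNormedField]; exact le_top2)) _ _
    -- chain rule for w ∘ ψ in space
    have hwψC : ContDiff ℝ (⊤:ℕ∞) (fun p : ℝ × (Fin n → ℝ) => w (ψ p.1 p.2) p.1 i) :=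
      contDiff_pi.1 (hw.comp (hψ.prodMk contDiff_fst)) i
    have hwψ : fderiv ℝ (fun y => w (ψ t y) t i) x₀ (Pi.single j 1)
        = ∑ k, A i k * jacobian (ψ t) x₀ k j := by
      have hψt : DifferentiableAt ℝ (ψ t) x₀ := ((hψslice t).differentiable (by simp)) x₀
      have hwt : DifferentiableAt ℝ (fun z => w z t i) X :=
        ((hwslice t i).differentiable (by simp)) X
      have hcomp : HasFDerivAt (fun y => w (ψ t y) t i)
          ((fderiv ℝ (fun z => w z t i) X).comp (fderiv ℝ (ψ t) x₀)) x₀ :=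
        hwt.hasFDerivAt.comp x₀ hψt.hasFDerivAt
      rw [hcomp.fderiv, ContinuousLinearMap.comp_apply,
        clm_apply_eq_sum (fderiv ℝ (fun z => w z t i) X) (fderiv ℝ (ψ t) x₀ (Pi.single j 1))]
      refine Finset.sum_congr rfl fun k _ => ?_
      rw [mul_comm]
      congr 1
      exact (fderiv_comp_pi_apply hψt k (Pi.single j 1)).symm
    -- assemble
    have e1 : (fun s => jacobian (ψ s) x₀ i j) = fun s => fderiv ℝ f (s, x₀) u₀ := funext hJf
    rw [e1]
    convert hDer using 1
    rw [happ ((1:ℝ), (0:Fin n → ℝ)) u₀, hsymm, ← happ u₀ ((1:ℝ), (0:Fin n → ℝ))]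
    have e2 : (fun p : ℝ × (Fin n → ℝ) => fderiv ℝ f p ((1:ℝ), (0:Fin n → ℝ)))
        = fun p : ℝ × (Fin n → ℝ) => w (ψ p.1 p.2) p.1 i := funext hg
    rw [e2]
    rw [← fderiv_slice_right ((hwψC.differentiable (by simp)) (t, x₀)) (Pi.single j 1)]
    exact hwψ.symm
  -- Step 2 : derivative of the determinant
  have hdetDer : HasDerivAt (fun s => (jacobian (ψ s) x₀).det)
      ((∑ i, A i i) * (jacobian (ψ t) x₀).det) t := by
    have h := hasDerivAt_det'
      (A := fun s => jacobian (ψ s) x₀)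
      (A' := fun i j => ∑ k, A i k * jacobian (ψ t) x₀ k j) entry
    rwa [sum_det_updateRow (jacobian (ψ t) x₀) A] at h
  -- Step 3 : derivative along the flow of Dd
  have hcurveψ : HasDerivAt (fun s => ψ s x₀) (w X t) t := by
    refine hasDerivAt_pi.2 fun i => ?_
    have hdi : DifferentiableAt ℝ (fun s => ψ s x₀ i) t := by
      have : ContDiff ℝ (⊤:ℕ∞) (fun s : ℝ => ψ s x₀ i) :=
        (contDiff_pi.1 hψ i).comp (contDiff_id.prodMk contDiff_const)
      exact (this.differentiable (by simp)) t
    have h := hdi.hasDerivAt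
    rwa [hflow t x₀ i] at h
  have hPQ : HasDerivAt (fun s => Dd (ψ s x₀) s)
      (fderiv ℝ (fun p : (Fin n → ℝ) × ℝ => Dd p.1 p.2) (X, t) (w X t, 1)) t :=
    HasFDerivAt.comp_hasDerivAt (f := fun s => (ψ s x₀, s))
      (l := fun p : (Fin n → ℝ) × ℝ => Dd p.1 p.2) t
      ((hDdd (X, t)).hasFDerivAt) (HasDerivAt.prodMk hcurveψ (hasDerivAt_id' t))
  -- Step 4 : the product is constant
  have hconst : HasDerivAt (fun s => Dd (ψ s x₀) s * (jacobian (ψ s) x₀).det) 0 t := by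
    have hfun : (fun s => Dd (ψ s x₀) s * (jacobian (ψ s) x₀).det) = fun _ => D₀ x₀ :=
      funext fun s => hmass s x₀
    rw [hfun]; exact hasDerivAt_const t _
  have heq := (hPQ.mul hdetDer).unique hconst
  set ℓ := fderiv ℝ (fun p : (Fin n → ℝ) × ℝ => Dd p.1 p.2) (X, t) with hℓ
  have key : ℓ (w X t, 1) + Dd X t * (∑ i, A i i) = 0 := by
    have h0 : (ℓ (w X t, 1) + Dd X t * (∑ i, A i i)) * (jacobian (ψ t) x₀).det = 0 := by
      linear_combination heq
    exact (mul_eq_zero.mp h0).resolve_right hdet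
  -- Step 5 : rewrite the goal
  set L1 := fderiv ℝ (fun y => Dd y t) X with hL1
  have hterm : ∀ i, fderiv ℝ (fun y => Dd y t * w y t i) X (Pi.single i 1)
      = Dd X t * A i i + w X t i * L1 (Pi.single i 1) := by
    intro i
    rw [fderiv_fun_mul ((hDslice.differentiable (by simp)) X) (((hwslice t i).differentiable (by simp)) X)]
    simp [smul_eq_mul]
    rfl
  have hderivD : deriv (fun s => Dd X s) t = ℓ ((0 : Fin n → ℝ), (1:ℝ)) :=
    deriv_slice_snd (hDdd (X, t))
  have hsplit : ℓ (w X t, 1) = ℓ ((0 : Fin n → ℝ), (1:ℝ)) + ∑ i, w X t i * L1 (Pi.single i 1) := by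
    have h1 : (w X t, (1:ℝ)) = ((0 : Fin n → ℝ), (1:ℝ)) + (w X t, (0:ℝ)) := by
      simp [Prod.ext_iff]
    rw [h1, map_add]
    congr 1
    have h2 : ℓ (w X t, (0:ℝ)) = L1 (w X t) :=
      (fderiv_slice_left (hDdd (X, t)) (w X t)).symm
    rw [h2, clm_apply_eq_sum L1 (w X t)]
  rw [hderivD]
  calc ℓ ((0 : Fin n → ℝ), (1:ℝ)) + ∑ i, fderiv ℝ (fun y => Dd y t * w y t i) X (Pi.single i 1)
      = ℓ ((0 : Fin n → ℝ), (1:ℝ)) + ∑ i, (Dd X t * A i i + w X t i * L1 (Pi.single i 1)) := by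
        rw [Finset.sum_congr rfl fun i _ => hterm i]
    _ = (ℓ ((0 : Fin n → ℝ), (1:ℝ)) + ∑ i, w X t i * L1 (Pi.single i 1))
          + Dd X t * (∑ i, A i i) := by
        rw [Finset.sum_add_distrib, ← Finset.mul_sum]; ring
    _ = ℓ (w X t, 1) + Dd X t * (∑ i, A i i) := by rw [hsplit]
    _ = 0 := key

private lemma jacobian_comp_eq {n : ℕ} (f g : (Fin n → ℝ) → (Fin n → ℝ)) (x : Fin n → ℝ)
    (hf : DifferentiableAt ℝ f (g x)) (hg : DifferentiableAt ℝ g x) :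
    jacobian (fun y => f (g y)) x = jacobian f (g x) * jacobian g x := by
  funext i j
  have hfi : DifferentiableAt ℝ (fun z => f z i) (g x) :=
    DifferentiableAt.comp (g x)
      ((ContinuousLinearMap.proj i : (Fin n → ℝ) →L[ℝ] ℝ).differentiableAt) hf
  have hcomp : HasFDerivAt (fun y => f (g y) i)
      ((fderiv ℝ (fun z => f z i) (g x)).comp (fderiv ℝ g x)) x :=
    hfi.hasFDerivAt.comp x hg.hasFDerivAt
  show fderiv ℝ (fun y => f (g y) i) x (Pi.single j 1) = _
  rw [Matrix.mul_apply, hcomp.fderiv, ContinuousLinearMap.comp_apply,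
    clm_apply_eq_sum (fderiv ℝ (fun z => f z i) (g x)) (fderiv ℝ g x (Pi.single j 1))]
  refine Finset.sum_congr rfl fun k _ => ?_
  rw [mul_comm]
  congr 1
  exact (fderiv_comp_pi_apply hg k (Pi.single j 1)).symm


/-- **Variation of an advected density (the D′-equation).**
If `D(φ(t,ε,x₀),t,ε) · det(D_{x₀}φ(t,ε,x₀)) = D₀(x₀)` for a smooth two-parameter
family of diffeomorphisms `φ` with `∂φ/∂t = u(φ,t,ε)` and `∂φ/∂ε = ξ(φ,t,ε)`, then
at every point: `∂D/∂t + div(D u) = 0` and `∂D/∂ε + div(D ξ) = 0`. -/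
theorem advected_density_variation
    {n : ℕ}
    (φ η : ℝ → ℝ → (Fin n → ℝ) → (Fin n → ℝ))
    (u ξ : (Fin n → ℝ) → ℝ → ℝ → (Fin n → ℝ))
    (D : (Fin n → ℝ) → ℝ → ℝ → ℝ) (D₀ : (Fin n → ℝ) → ℝ)
    -- smoothness
    (hφ : ContDiff ℝ (⊤ : ℕ∞) (fun p : ℝ × ℝ × (Fin n → ℝ) => φ p.1 p.2.1 p.2.2))
    (hu : ContDiff ℝ (⊤ : ℕ∞) (fun p : (Fin n → ℝ) × ℝ × ℝ => u p.1 p.2.1 p.2.2))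
    (hξ : ContDiff ℝ (⊤ : ℕ∞) (fun p : (Fin n → ℝ) × ℝ × ℝ => ξ p.1 p.2.1 p.2.2))
    (hD : ContDiff ℝ (⊤ : ℕ∞) (fun p : (Fin n → ℝ) × ℝ × ℝ => D p.1 p.2.1 p.2.2))
    (hD₀ : ContDiff ℝ (⊤ : ℕ∞) D₀)
    -- φ(t,ε,·) is a diffeomorphism of ℝⁿ for each (t,ε), with smooth inverse η(t,ε,·)
    (hη : ContDiff ℝ (⊤ : ℕ∞) (fun p : ℝ × ℝ × (Fin n → ℝ) => η p.1 p.2.1 p.2.2))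
    (hφη : ∀ t ε x, φ t ε (η t ε x) = x)
    (hηφ : ∀ t ε x, η t ε (φ t ε x) = x)
    -- ∂φ/∂t(t,ε,x₀) = u(φ(t,ε,x₀),t,ε)
    (hflow_t : ∀ t ε x₀ i, deriv (fun s => φ s ε x₀ i) t = u (φ t ε x₀) t ε i)
    -- ∂φ/∂ε(t,ε,x₀) = ξ(φ(t,ε,x₀),t,ε)
    (hflow_ε : ∀ t ε x₀ i, deriv (fun e => φ t e x₀ i) ε = ξ (φ t ε x₀) t ε i)
    -- mass conservation : D(φ(t,ε,x₀),t,ε)·det(D_{x₀}φ(t,ε,x₀)) = D₀(x₀)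
    (hmass : ∀ t ε x₀, D (φ t ε x₀) t ε * (jacobian (φ t ε) x₀).det = D₀ x₀) :
    ∀ x t ε,
      deriv (fun s => D x s ε) t
          + ∑ i, fderiv ℝ (fun y => D y t ε * u y t ε i) x (Pi.single i 1) = 0
      ∧ deriv (fun e => D x t e) ε
          + ∑ i, fderiv ℝ (fun y => D y t ε * ξ y t ε i) x (Pi.single i 1) = 0 := by
  intro x t ε
  set x₀ := η t ε x with hx₀
  have hx : φ t ε x₀ = x := hφη t ε x
  have hφs : ContDiff ℝ (⊤:ℕ∞) (φ t ε) :=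
    hφ.comp (contDiff_const.prodMk (contDiff_const.prodMk contDiff_id))
  have hηs : ContDiff ℝ (⊤:ℕ∞) (η t ε) :=
    hη.comp (contDiff_const.prodMk (contDiff_const.prodMk contDiff_id))
  have hdet : (jacobian (φ t ε) x₀).det ≠ 0 := by
    have hcomp : jacobian (fun y => φ t ε (η t ε y)) x
        = jacobian (φ t ε) x₀ * jacobian (η t ε) x :=
      jacobian_comp_eq (φ t ε) (η t ε) x ((hφs.differentiable (by simp)) _)
        ((hηs.differentiable (by simp)) x)
    have hid : jacobian (fun y => φ t ε (η t ε y)) x = 1 := by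
      have hfe : (fun y => φ t ε (η t ε y)) = fun y : Fin n → ℝ => y := funext fun y => hφη t ε y
      rw [hfe]
      funext i j
      show fderiv ℝ (fun y : Fin n → ℝ => y i) x (Pi.single j 1) = (1 : Matrix (Fin n) (Fin n) ℝ) i j
      rw [show (fun y : Fin n → ℝ => y i)
          = fun y => (ContinuousLinearMap.proj i : (Fin n → ℝ) →L[ℝ] ℝ) y from rfl,
        (ContinuousLinearMap.proj i : (Fin n → ℝ) →L[ℝ] ℝ).fderiv]
      simp [Matrix.one_apply, Pi.single_apply, eq_comm]
    have h1 : (jacobian (φ t ε) x₀).det * (jacobian (η t ε) x).det = 1 := by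
      rw [← Matrix.det_mul, ← hcomp, hid, Matrix.det_one]
    exact left_ne_zero_of_mul_eq_one h1
  constructor
  · exact key_aux (fun s y => φ s ε y) (fun y s => u y s ε) (fun y s => D y s ε) D₀
      (hφ.comp (contDiff_fst.prodMk (contDiff_const.prodMk contDiff_snd)))
      (hu.comp (contDiff_fst.prodMk (contDiff_snd.prodMk contDiff_const)))
      (hD.comp (contDiff_fst.prodMk (contDiff_snd.prodMk contDiff_const)))
      (fun s y i => hflow_t s ε y i) (fun s y => hmass s ε y) t x₀ x hx hdet
  · exact key_aux (fun e y => φ t e y) (fun y e => ξ y t e) (fun y e => D y t e) D₀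
      (hφ.comp (contDiff_const.prodMk (contDiff_fst.prodMk contDiff_snd)))
      (hξ.comp (contDiff_fst.prodMk (contDiff_const.prodMk contDiff_snd)))
      (hD.comp (contDiff_fst.prodMk (contDiff_const.prodMk contDiff_snd)))
      (fun e y i => hflow_ε t e y i) (fun e y => hmass t e y) ε x₀ x hx hdet
end
end

section
/- Circulation transport lemma (time derivative of a Kelvin circulation integral around a material loop). Let γ₀ : [0,1] → ℝⁿ be a smooth loop with γ₀(0) = γ₀(1), and let v : ℝⁿ × ℝ → ℝⁿ be smooth. Define the circulation I(t) := ∫₀¹ v(φ(t, γ₀(s)), t) · ∂ₛ[φ(t, γ₀(s))] ds. Then for all t: I′(t) = ∫₀¹ [∂ₜv + (u·∇)v + v_j∇u^j](φ(t, γ₀(s)), t) · ∂ₛ[φ(t, γ₀(s))] ds. -/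
open scoped BigOperators

noncomputable section


lemma one_le_top' : (1 : WithTop ℕ∞) ≤ ((⊤ : ℕ∞) : WithTop ℕ∞) := by exact_mod_cast le_top

lemma top_add_one_le' : ((⊤ : ℕ∞) : WithTop ℕ∞) + 1 ≤ ((⊤ : ℕ∞) : WithTop ℕ∞) :=
  le_of_eq ENat.coe_top_add_one

section helpers
variable {E : Type*} [NormedAddCommGroup E] [NormedSpace ℝ E]

lemma fderiv_partial_fst (f : E × ℝ → ℝ) (hf : Differentiable ℝ f) (x : E) (t : ℝ) (w : E) :
    fderiv ℝ (fun y => f (y, t)) x w = fderiv ℝ f (x, t) (w, 0) := by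
  have h : HasFDerivAt (fun y => f (y, t))
      ((fderiv ℝ f (x, t)).comp (ContinuousLinearMap.inl ℝ E ℝ)) x :=
    ((hf (x, t)).hasFDerivAt).comp x (hasFDerivAt_prodMk_left x t)
  rw [h.fderiv]; rfl

lemma deriv_partial_snd (f : E × ℝ → ℝ) (hf : Differentiable ℝ f) (x : E) (t : ℝ) :
    deriv (fun s => f (x, s)) t = fderiv ℝ f (x, t) (0, 1) := by
  have h : HasDerivAt (fun s : ℝ => (x, s)) ((0 : E), (1 : ℝ)) t :=
    (hasDerivAt_const t x).prodMk (hasDerivAt_id t)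
  exact (((hf (x, t)).hasFDerivAt).comp_hasDerivAt t h).deriv

lemma hasDerivAt_comp_curve (f : E × ℝ → ℝ) (hf : Differentiable ℝ f)
    {c : ℝ → E} {c' : E} {τ : ℝ} (hc : HasDerivAt c c' τ) :
    HasDerivAt (fun σ => f (c σ, σ))
      (deriv (fun s => f (c τ, s)) τ + fderiv ℝ (fun y => f (y, τ)) (c τ) c') τ := by
  have h1 : HasDerivAt (fun σ => (c σ, σ)) (c', 1) τ := hc.prodMk (hasDerivAt_id τ)
  have h2 : HasDerivAt (fun σ => f (c σ, σ)) (fderiv ℝ f (c τ, τ) (c', 1)) τ :=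
    HasFDerivAt.comp_hasDerivAt (f := fun σ => (c σ, σ)) (x := τ) ((hf (c τ, τ)).hasFDerivAt) h1
  convert h2 using 1
  rw [fderiv_partial_fst f hf, deriv_partial_snd f hf]
  have he : ((c', (1 : ℝ)) : E × ℝ) = ((0 : E), (1 : ℝ)) + (c', (0 : ℝ)) := by simp
  rw [he, map_add]

end helpers

lemma mixed_partial (f : ℝ × ℝ → ℝ) (hf : ContDiff ℝ (⊤ : ℕ∞) f) (τ s : ℝ) :
    HasDerivAt (fun τ' => deriv (fun r => f (τ', r)) s)
      (deriv (fun r => deriv (fun σ => f (σ, r)) τ) s) τ := by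
  have hdf : Differentiable ℝ f := hf.differentiable (zero_lt_one.trans_le one_le_top').ne'
  have hf' : ContDiff ℝ (⊤ : ℕ∞) (fun q => fderiv ℝ f q) := hf.fderiv_right top_add_one_le'
  set B := fderiv ℝ (fun q => fderiv ℝ f q) (τ, s) with hBdef
  have hB : HasFDerivAt (fun q => fderiv ℝ f q) B (τ, s) :=
    (hf'.differentiable (zero_lt_one.trans_le one_le_top').ne' (τ, s)).hasFDerivAt
  have hsymm := second_derivative_symmetric (fun y => (hdf y).hasFDerivAt) hB
  have e1 : ∀ τ' : ℝ, deriv (fun r => f (τ', r)) s = fderiv ℝ f (τ', s) ((0 : ℝ), (1 : ℝ)) :=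
    fun τ' => deriv_partial_snd f hdf τ' s
  have e2 : ∀ r : ℝ, deriv (fun σ => f (σ, r)) τ = fderiv ℝ f (τ, r) ((1 : ℝ), (0 : ℝ)) := by
    intro r
    have h : HasDerivAt (fun σ : ℝ => (σ, r)) ((1 : ℝ), (0 : ℝ)) τ :=
      (hasDerivAt_id τ).prodMk (hasDerivAt_const τ r)
    exact (((hdf (τ, r)).hasFDerivAt).comp_hasDerivAt τ h).deriv
  have h3 : HasDerivAt (fun τ' => fderiv ℝ f (τ', s) ((0 : ℝ), (1 : ℝ)))
      (B ((1 : ℝ), (0 : ℝ)) ((0 : ℝ), (1 : ℝ))) τ := by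
    have hι : HasDerivAt (fun τ' : ℝ => (τ', s)) ((1 : ℝ), (0 : ℝ)) τ :=
      (hasDerivAt_id τ).prodMk (hasDerivAt_const τ s)
    have h4 : HasDerivAt (fun τ' : ℝ => fderiv ℝ f (τ', s)) (B ((1 : ℝ), (0 : ℝ))) τ :=
      hB.comp_hasDerivAt τ hι
    simpa using h4.clm_apply (hasDerivAt_const τ ((0 : ℝ), (1 : ℝ)))
  have h6 : HasDerivAt (fun r => fderiv ℝ f (τ, r) ((1 : ℝ), (0 : ℝ)))
      (B ((0 : ℝ), (1 : ℝ)) ((1 : ℝ), (0 : ℝ))) s := by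
    have hι : HasDerivAt (fun r : ℝ => (τ, r)) ((0 : ℝ), (1 : ℝ)) s :=
      (hasDerivAt_const s τ).prodMk (hasDerivAt_id s)
    have h4 : HasDerivAt (fun r : ℝ => fderiv ℝ f (τ, r)) (B ((0 : ℝ), (1 : ℝ))) s :=
      hB.comp_hasDerivAt s hι
    simpa using h4.clm_apply (hasDerivAt_const s ((1 : ℝ), (0 : ℝ)))
  have key : deriv (fun r => deriv (fun σ => f (σ, r)) τ) s
      = B ((1 : ℝ), (0 : ℝ)) ((0 : ℝ), (1 : ℝ)) := by
    rw [funext e2, h6.deriv, hsymm]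
  rw [funext e1, key]
  exact h3

/-- The Euler–Poincaré transport operator
`[∂ₜv + (u·∇)v + v_j ∇u^j]ᵢ` evaluated at `(x,t)`. -/
def EPop {n : ℕ} (u v : (Fin n → ℝ) → ℝ → (Fin n → ℝ))
    (x : Fin n → ℝ) (t : ℝ) : Fin n → ℝ :=
  fun i =>
    deriv (fun s => v x s i) t
      + fderiv ℝ (fun y => v y t i) x (u x t)
      + ∑ j, v x t j * fderiv ℝ (fun y => u y t j) x (Pi.single i 1)

lemma sum_algebra (n : ℕ) (a b w g : Fin n → ℝ) (c : Fin n → Fin n → ℝ) (D : Fin n → ℝ)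
    (hD : ∀ i, D i = ∑ k, g k * c i k) :
    ∑ i, (a i + b i + ∑ j, w j * c j i) * g i = ∑ i, ((a i + b i) * g i + w i * D i) := by
  simp_rw [hD, add_mul, Finset.sum_mul, Finset.mul_sum, Finset.sum_add_distrib]
  congr 1
  rw [Finset.sum_comm]
  exact Finset.sum_congr rfl fun i _ => Finset.sum_congr rfl fun j _ => by ring

/-- **Circulation transport lemma.**  For a material loop carried by the flow `φ`
of the vector field `u`, the Kelvin circulation integral
`I(t) = ∫₀¹ v(φ(t,γ₀(s)),t) · ∂ₛ[φ(t,γ₀(s))] ds` has time derivative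
`I′(t) = ∫₀¹ [∂ₜv + (u·∇)v + v_j∇u^j](φ(t,γ₀(s)),t) · ∂ₛ[φ(t,γ₀(s))] ds`. -/
theorem circulation_transport_lemma
    {n : ℕ}
    (u v : (Fin n → ℝ) → ℝ → (Fin n → ℝ))
    (φ : ℝ → (Fin n → ℝ) → (Fin n → ℝ))
    (γ₀ : ℝ → (Fin n → ℝ))
    -- smoothness
    (hu : ContDiff ℝ (⊤ : ℕ∞) (fun p : (Fin n → ℝ) × ℝ => u p.1 p.2))
    (hv : ContDiff ℝ (⊤ : ℕ∞) (fun p : (Fin n → ℝ) × ℝ => v p.1 p.2))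
    (hφ : ContDiff ℝ (⊤ : ℕ∞) (fun p : ℝ × (Fin n → ℝ) => φ p.1 p.2))
    (hγ : ContDiff ℝ (⊤ : ℕ∞) γ₀)
    -- γ₀ is a loop
    (hloop : γ₀ 0 = γ₀ 1)
    -- φ is the flow map of u
    (hflow : ∀ t x₀ i, deriv (fun s => φ s x₀ i) t = u (φ t x₀) t i)
    (hinit : ∀ x₀, φ 0 x₀ = x₀) :
    ∀ t,
      HasDerivAt
        (fun τ => ∫ s in (0:ℝ)..1,
          ∑ i, v (φ τ (γ₀ s)) τ i * deriv (fun r => φ τ (γ₀ r) i) s)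
        (∫ s in (0:ℝ)..1,
          ∑ i, EPop u v (φ t (γ₀ s)) t i * deriv (fun r => φ t (γ₀ r) i) s)
        t := by
  intro t
  classical
  -- differentiability of components
  have hVd : ∀ i, Differentiable ℝ (fun p : (Fin n → ℝ) × ℝ => v p.1 p.2 i) :=
    fun i => (contDiff_pi.mp hv i).differentiable (zero_lt_one.trans_le one_le_top').ne'
  have hUd : ∀ i, Differentiable ℝ (fun p : (Fin n → ℝ) × ℝ => u p.1 p.2 i) :=
    fun i => (contDiff_pi.mp hu i).differentiable (zero_lt_one.trans_le one_le_top').ne'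
  have hPc : ∀ i, ContDiff ℝ (⊤ : ℕ∞) (fun q : ℝ × ℝ => φ q.1 (γ₀ q.2) i) :=
    fun i => contDiff_pi.mp (hφ.comp (contDiff_fst.prodMk (hγ.comp contDiff_snd))) i
  have hPd : ∀ i, Differentiable ℝ (fun q : ℝ × ℝ => φ q.1 (γ₀ q.2) i) :=
    fun i => (hPc i).differentiable (zero_lt_one.trans_le one_le_top').ne'
  have hUslice : ∀ (τ : ℝ) i, Differentiable ℝ (fun y => u y τ i) := fun τ i =>
    ((contDiff_pi.mp hu i).comp (contDiff_id.prodMk contDiff_const)).differentiable (zero_lt_one.trans_le one_le_top').ne'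
  -- time-curve derivative (the flow property, upgraded to HasDerivAt)
  have hΦ : ∀ (τ : ℝ) (x₀ : Fin n → ℝ), HasDerivAt (fun σ => φ σ x₀) (u (φ τ x₀) τ) τ := by
    intro τ x₀
    rw [hasDerivAt_pi]
    intro i
    have hsm : ContDiff ℝ (⊤ : ℕ∞) (fun σ : ℝ => φ σ x₀ i) :=
      contDiff_pi.mp (hφ.comp (contDiff_id.prodMk contDiff_const)) i
    have hd := ((hsm.differentiable (zero_lt_one.trans_le one_le_top').ne') τ).hasDerivAt
    rwa [hflow τ x₀ i] at hd
  -- space-curve derivative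
  have hG : ∀ (τ s : ℝ), HasDerivAt (fun r => φ τ (γ₀ r))
      (fun i => deriv (fun r => φ τ (γ₀ r) i) s) s := by
    intro τ s
    rw [hasDerivAt_pi]
    intro i
    have hsm : ContDiff ℝ (⊤ : ℕ∞) (fun r : ℝ => φ τ (γ₀ r) i) :=
      contDiff_pi.mp (hφ.comp (contDiff_const.prodMk hγ)) i
    exact ((hsm.differentiable (zero_lt_one.trans_le one_le_top').ne') s).hasDerivAt
  -- pointwise differentiation in time of the integrand
  have claim : ∀ (τ s : ℝ),
      HasDerivAt (fun σ => ∑ i, v (φ σ (γ₀ s)) σ i * deriv (fun r => φ σ (γ₀ r) i) s)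
        (∑ i, EPop u v (φ τ (γ₀ s)) τ i * deriv (fun r => φ τ (γ₀ r) i) s) τ := by
    intro τ s
    have hterm : ∀ i : Fin n, HasDerivAt
        (fun σ => v (φ σ (γ₀ s)) σ i * deriv (fun r => φ σ (γ₀ r) i) s)
        ((deriv (fun s' => v (φ τ (γ₀ s)) s' i) τ
            + fderiv ℝ (fun y => v y τ i) (φ τ (γ₀ s)) (u (φ τ (γ₀ s)) τ))
              * deriv (fun r => φ τ (γ₀ r) i) s
          + v (φ τ (γ₀ s)) τ i
            * fderiv ℝ (fun y => u y τ i) (φ τ (γ₀ s))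
                (fun k => deriv (fun r => φ τ (γ₀ r) k) s)) τ := by
      intro i
      have h1 : HasDerivAt (fun σ => v (φ σ (γ₀ s)) σ i)
          (deriv (fun s' => v (φ τ (γ₀ s)) s' i) τ
            + fderiv ℝ (fun y => v y τ i) (φ τ (γ₀ s)) (u (φ τ (γ₀ s)) τ)) τ :=
        hasDerivAt_comp_curve (fun p => v p.1 p.2 i) (hVd i) (hΦ τ (γ₀ s))
      have h2 : HasDerivAt (fun σ => deriv (fun r => φ σ (γ₀ r) i) s)
          (fderiv ℝ (fun y => u y τ i) (φ τ (γ₀ s))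
            (fun k => deriv (fun r => φ τ (γ₀ r) k) s)) τ := by
        have hm : HasDerivAt (fun τ' => deriv (fun r => φ τ' (γ₀ r) i) s)
            (deriv (fun r => deriv (fun σ => φ σ (γ₀ r) i) τ) s) τ :=
          mixed_partial (fun q : ℝ × ℝ => φ q.1 (γ₀ q.2) i) (hPc i) τ s
        have e : (fun r => deriv (fun σ => φ σ (γ₀ r) i) τ)
            = fun r => u (φ τ (γ₀ r)) τ i := by
          funext r; exact hflow τ (γ₀ r) i
        rw [e] at hm
        have hc : deriv (fun r => u (φ τ (γ₀ r)) τ i) s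
            = fderiv ℝ (fun y => u y τ i) (φ τ (γ₀ s))
                (fun k => deriv (fun r => φ τ (γ₀ r) k) s) :=
          (HasFDerivAt.comp_hasDerivAt (f := fun r => φ τ (γ₀ r)) (x := s)
            ((hUslice τ i (φ τ (γ₀ s))).hasFDerivAt) (hG τ s)).deriv
        rwa [hc] at hm
      exact h1.mul h2
    have hsum := HasDerivAt.fun_sum (u := Finset.univ) (fun i _ => hterm i)
    refine hsum.congr_deriv (Eq.symm ?_)
    -- algebra: rearrange the sum
    have hL : ∀ (L : (Fin n → ℝ) →L[ℝ] ℝ),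
        L (fun k => deriv (fun r => φ τ (γ₀ r) k) s)
          = ∑ k, deriv (fun r => φ τ (γ₀ r) k) s * L (Pi.single k 1) := by
      intro L
      have hdecomp : (fun k => deriv (fun r => φ τ (γ₀ r) k) s)
          = ∑ k, deriv (fun r => φ τ (γ₀ r) k) s • (Pi.single k 1 : Fin n → ℝ) := by
        funext j
        simp [Pi.single_apply]
      conv_lhs => rw [hdecomp]
      rw [map_sum]
      simp [smul_eq_mul]
    simp only [EPop]
    exact sum_algebra n
      (fun i => deriv (fun s' => v (φ τ (γ₀ s)) s' i) τ)
      (fun i => fderiv ℝ (fun y => v y τ i) (φ τ (γ₀ s)) (u (φ τ (γ₀ s)) τ))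
      (fun i => v (φ τ (γ₀ s)) τ i)
      (fun i => deriv (fun r => φ τ (γ₀ r) i) s)
      (fun j i => fderiv ℝ (fun y => u y τ j) (φ τ (γ₀ s)) (Pi.single i 1))
      (fun i => fderiv ℝ (fun y => u y τ i) (φ τ (γ₀ s))
        (fun k => deriv (fun r => φ τ (γ₀ r) k) s))
      (fun i => hL (fderiv ℝ (fun y => u y τ i) (φ τ (γ₀ s))))
  -- continuity facts
  have cΦ : Continuous (fun q : ℝ × ℝ => φ q.1 (γ₀ q.2)) :=
    hφ.continuous.comp (continuous_fst.prodMk (hγ.continuous.comp continuous_snd))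
  have base : Continuous (fun q : ℝ × ℝ => (φ q.1 (γ₀ q.2), q.1)) := cΦ.prodMk continuous_fst
  have cfV : ∀ i, Continuous (fun p : (Fin n → ℝ) × ℝ => fderiv ℝ (fun p' : (Fin n → ℝ) × ℝ => v p'.1 p'.2 i) p) :=
    fun i => ((contDiff_pi.mp hv i).fderiv_right top_add_one_le').continuous
  have cfU : ∀ i, Continuous (fun p : (Fin n → ℝ) × ℝ => fderiv ℝ (fun p' : (Fin n → ℝ) × ℝ => u p'.1 p'.2 i) p) :=
    fun i => ((contDiff_pi.mp hu i).fderiv_right top_add_one_le').continuous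
  have cfP : ∀ i, Continuous (fun q : ℝ × ℝ => fderiv ℝ (fun q' : ℝ × ℝ => φ q'.1 (γ₀ q'.2) i) q) :=
    fun i => ((hPc i).fderiv_right top_add_one_le').continuous
  -- rewriting EPop in terms of full Fréchet derivatives
  have eEP : ∀ (y : Fin n → ℝ) (θ : ℝ) (i : Fin n), EPop u v y θ i =
      fderiv ℝ (fun p : (Fin n → ℝ) × ℝ => v p.1 p.2 i) (y, θ) (0, 1)
        + fderiv ℝ (fun p : (Fin n → ℝ) × ℝ => v p.1 p.2 i) (y, θ) (u y θ, 0)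
        + ∑ j, v y θ j * fderiv ℝ (fun p : (Fin n → ℝ) × ℝ => u p.1 p.2 j) (y, θ)
            (Pi.single i 1, 0) := by
    intro y θ i
    have t1 : deriv (fun s => v y s i) θ
        = fderiv ℝ (fun p : (Fin n → ℝ) × ℝ => v p.1 p.2 i) (y, θ) (0, 1) :=
      deriv_partial_snd (fun p => v p.1 p.2 i) (hVd i) y θ
    have t2 : ∀ w, fderiv ℝ (fun y' => v y' θ i) y w
        = fderiv ℝ (fun p : (Fin n → ℝ) × ℝ => v p.1 p.2 i) (y, θ) (w, 0) :=
      fderiv_partial_fst (fun p => v p.1 p.2 i) (hVd i) y θ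
    have t3 : ∀ j w, fderiv ℝ (fun y' => u y' θ j) y w
        = fderiv ℝ (fun p : (Fin n → ℝ) × ℝ => u p.1 p.2 j) (y, θ) (w, 0) :=
      fun j => fderiv_partial_fst (fun p => u p.1 p.2 j) (hUd j) y θ
    simp only [EPop, t1, t2, t3]
  have eG : ∀ (i : Fin n) (τ s : ℝ), deriv (fun r => φ τ (γ₀ r) i) s
      = fderiv ℝ (fun q : ℝ × ℝ => φ q.1 (γ₀ q.2) i) (τ, s) (0, 1) :=
    fun i τ s => deriv_partial_snd (fun q => φ q.1 (γ₀ q.2) i) (hPd i) τ s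
  -- continuity of the derivative integrand in both variables
  have cF' : Continuous (fun q : ℝ × ℝ =>
      ∑ i, EPop u v (φ q.1 (γ₀ q.2)) q.1 i * deriv (fun r => φ q.1 (γ₀ r) i) q.2) := by
    have hrw : (fun q : ℝ × ℝ =>
        ∑ i, EPop u v (φ q.1 (γ₀ q.2)) q.1 i * deriv (fun r => φ q.1 (γ₀ r) i) q.2)
        = fun q : ℝ × ℝ => ∑ i,
          (fderiv ℝ (fun p : (Fin n → ℝ) × ℝ => v p.1 p.2 i) (φ q.1 (γ₀ q.2), q.1) (0, 1)
            + fderiv ℝ (fun p : (Fin n → ℝ) × ℝ => v p.1 p.2 i) (φ q.1 (γ₀ q.2), q.1)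
                (u (φ q.1 (γ₀ q.2)) q.1, 0)
            + ∑ j, v (φ q.1 (γ₀ q.2)) q.1 j
                * fderiv ℝ (fun p : (Fin n → ℝ) × ℝ => u p.1 p.2 j) (φ q.1 (γ₀ q.2), q.1)
                    (Pi.single i 1, 0))
          * fderiv ℝ (fun q' : ℝ × ℝ => φ q'.1 (γ₀ q'.2) i) q (0, 1) := by
      funext q
      exact Finset.sum_congr rfl fun i _ => by rw [eEP, eG]
    rw [hrw]
    apply continuous_finset_sum
    intro i _
    apply Continuous.mul
    · apply Continuous.add
      · apply Continuous.add
        · exact ((cfV i).comp base).clm_apply continuous_const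
        · exact ((cfV i).comp base).clm_apply
            ((hu.continuous.comp base).prodMk continuous_const)
      · apply continuous_finset_sum
        intro j _
        exact (((contDiff_pi.mp hv j).continuous.comp base).mul
          (((cfU j).comp base).clm_apply continuous_const))
    · exact (cfP i).clm_apply continuous_const
  -- continuity of the integrand in s for each fixed τ
  have cFs : ∀ τ : ℝ,
      Continuous (fun s => ∑ i, v (φ τ (γ₀ s)) τ i * deriv (fun r => φ τ (γ₀ r) i) s) := by
    intro τ
    apply continuous_finset_sum
    intro i _
    apply Continuous.mul
    · exact ((contDiff_pi.mp hv i).continuous).comp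
        ((cΦ.comp (continuous_const.prodMk continuous_id)).prodMk continuous_const)
    · exact (contDiff_pi.mp (hφ.comp (contDiff_const.prodMk hγ)) i).continuous_deriv one_le_top'
  -- uniform bound on a compact neighbourhood
  obtain ⟨C, hC⟩ := ((isCompact_closedBall t 1).prod (isCompact_uIcc (a := (0:ℝ)) (b := 1))).exists_bound_of_continuousOn cF'.continuousOn
  -- differentiation under the integral sign
  refine (intervalIntegral.hasDerivAt_integral_of_dominated_loc_of_deriv_le
    (F' := fun τ s => ∑ i, EPop u v (φ τ (γ₀ s)) τ i * deriv (fun r => φ τ (γ₀ r) i) s)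
    (bound := fun _ => C) (s := Metric.ball t 1) (Metric.ball_mem_nhds t one_pos) ?_ ?_ ?_ ?_ ?_ ?_).2
  · exact Filter.Eventually.of_forall fun τ => (cFs τ).aestronglyMeasurable
  · exact (cFs t).intervalIntegrable 0 1
  · exact (cF'.comp (continuous_const.prodMk continuous_id)).aestronglyMeasurable
  · refine Filter.Eventually.of_forall fun s hs => fun τ hτ => ?_
    exact hC (τ, s) ⟨Metric.ball_subset_closedBall hτ, Set.uIoc_subset_uIcc hs⟩
  · exact intervalIntegrable_const
  · exact Filter.Eventually.of_forall fun s _ => fun τ _ => claim τ s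
end
end

section
/- Curl representation of the linearized momentum fluctuation in ℝ³. Let D̄ : ℝ³ × ℝ → ℝ and ū, ξ : ℝ³ × ℝ → ℝ³ be smooth, with D̄ satisfying ∂ₜD̄ + div(D̄ū) = 0. With u′ := ∂ₜξ + (ū·∇)ξ − (ξ·∇)ū and D′ := −div(D̄ξ), the identity D̄u′ + D′ū = ∂ₜ(D̄ξ) − curl(ū × (D̄ξ)) holds everywhere. -/
open scoped BigOperators

noncomputable section

lemma fdir_aux (f : (Fin 3 → ℝ) → ℝ) (x v : Fin 3 → ℝ) :
    fderiv ℝ f x v = ∑ j, v j * fderiv ℝ f x (Pi.single j 1) := by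
  have hv : v = ∑ j, v j • (Pi.single j 1 : Fin 3 → ℝ) := by
    funext k
    simp [Pi.single_apply, Finset.sum_apply]
  conv_lhs => rw [hv]
  rw [map_sum]
  simp [smul_eq_mul]

lemma fmul_aux (f g : (Fin 3 → ℝ) → ℝ) (x v : Fin 3 → ℝ)
    (hf : DifferentiableAt ℝ f x) (hg : DifferentiableAt ℝ g x) :
    fderiv ℝ (fun y => f y * g y) x v
      = f x * fderiv ℝ g x v + g x * fderiv ℝ f x v := by
  rw [fderiv_fun_mul hf hg]
  simp [smul_eq_mul]

lemma alg_aux (d dt : ℝ) (dd u xv xt : Fin 3 → ℝ) (du dx : Fin 3 → Fin 3 → ℝ)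
    (hcont : dt + ∑ j, (d * du j j + u j * dd j) = 0) (i : Fin 3) :
    d * (xt i + (∑ j, u j * dx j i) - (∑ j, xv j * du j i))
      + (-(∑ j, (d * dx j j + xv j * dd j))) * u i
    = (dt * xv i + d * xt i)
      - ( (du (i+1) i * (d * xv (i+1)) + u i * (dd (i+1) * xv (i+1) + d * dx (i+1) (i+1))
          - (du (i+1) (i+1) * (d * xv i) + u (i+1) * (dd (i+1) * xv i + d * dx (i+1) i)))
        - ((du (i+2) (i+2) * (d * xv i) + u (i+2) * (dd (i+2) * xv i + d * dx (i+2) i))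
          - (du (i+2) i * (d * xv (i+2)) + u i * (dd (i+2) * xv (i+2) + d * dx (i+2) (i+2)))) ) := by
  simp only [Fin.sum_univ_three] at hcont ⊢
  fin_cases i <;> simp <;>
  first
  | linear_combination (-(xv 0)) * hcont
  | linear_combination (-(xv 1)) * hcont
  | linear_combination (-(xv 2)) * hcont

/-- Curl of a vector field on ℝ³ (cyclic, 0-based indices). -/
def curl3 (v : (Fin 3 → ℝ) → (Fin 3 → ℝ)) (x : Fin 3 → ℝ) : Fin 3 → ℝ :=
  fun i => fderiv ℝ (fun y => v y (i + 2)) x (Pi.single (i + 1) 1)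
         - fderiv ℝ (fun y => v y (i + 1)) x (Pi.single (i + 2) 1)

/-- Cross product on ℝ³. -/
def cross (a b : Fin 3 → ℝ) : Fin 3 → ℝ :=
  fun i => a (i + 1) * b (i + 2) - a (i + 2) * b (i + 1)

/-- **Curl representation of the linearized momentum fluctuation in ℝ³.**
With `u′ = ∂ₜξ + (ū·∇)ξ − (ξ·∇)ū` and `D′ = −div(D̄ξ)`, and `D̄` satisfying
`∂ₜD̄ + div(D̄ū) = 0`, the identity
`D̄u′ + D′ū = ∂ₜ(D̄ξ) − curl(ū × (D̄ξ))` holds everywhere. -/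
theorem curl_representation_momentum_fluctuation
    (Dbar : (Fin 3 → ℝ) → ℝ → ℝ)
    (ubar ξ : (Fin 3 → ℝ) → ℝ → (Fin 3 → ℝ))
    -- smoothness
    (hD : ContDiff ℝ (⊤ : ℕ∞) (fun p : (Fin 3 → ℝ) × ℝ => Dbar p.1 p.2))
    (hu : ContDiff ℝ (⊤ : ℕ∞) (fun p : (Fin 3 → ℝ) × ℝ => ubar p.1 p.2))
    (hξ : ContDiff ℝ (⊤ : ℕ∞) (fun p : (Fin 3 → ℝ) × ℝ => ξ p.1 p.2))
    -- mean continuity equation : ∂ₜD̄ + div(D̄ū) = 0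
    (hcont : ∀ x t,
      deriv (fun s => Dbar x s) t
        + ∑ i, fderiv ℝ (fun y => Dbar y t * ubar y t i) x (Pi.single i 1) = 0)
    -- u′ := ∂ₜξ + (ū·∇)ξ − (ξ·∇)ū
    (u' : (Fin 3 → ℝ) → ℝ → (Fin 3 → ℝ))
    (hu' : ∀ x t i, u' x t i =
      deriv (fun s => ξ x s i) t
        + fderiv ℝ (fun y => ξ y t i) x (ubar x t)
        - fderiv ℝ (fun y => ubar y t i) x (ξ x t))
    -- D′ := −div(D̄ξ)
    (D' : (Fin 3 → ℝ) → ℝ → ℝ)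
    (hD' : ∀ x t, D' x t =
      -(∑ i, fderiv ℝ (fun y => Dbar y t * ξ y t i) x (Pi.single i 1))) :
    -- conclusion : D̄u′ + D′ū = ∂ₜ(D̄ξ) − curl(ū × (D̄ξ))
    ∀ x t i,
      Dbar x t * u' x t i + D' x t * ubar x t i
        = deriv (fun s => Dbar x s * ξ x s i) t
          - curl3 (fun y => cross (ubar y t) (fun j => Dbar y t * ξ y t j)) x i := by
  intro x t i
  -- differentiability of slices
  have hD1 : ∀ t : ℝ, Differentiable ℝ fun y => Dbar y t := fun t =>
    (hD.comp (contDiff_id.prodMk contDiff_const)).differentiable (by norm_num)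
  have hu1 : ∀ (t : ℝ) (j : Fin 3), Differentiable ℝ fun y => ubar y t j := fun t j =>
    (((contDiff_pi.mp hu) j).comp (contDiff_id.prodMk contDiff_const)).differentiable (by norm_num)
  have hx1 : ∀ (t : ℝ) (j : Fin 3), Differentiable ℝ fun y => ξ y t j := fun t j =>
    (((contDiff_pi.mp hξ) j).comp (contDiff_id.prodMk contDiff_const)).differentiable (by norm_num)
  have hDt1 : Differentiable ℝ fun s => Dbar x s :=
    (hD.comp (contDiff_const.prodMk contDiff_id)).differentiable (by norm_num)
  have hxt1 : ∀ j : Fin 3, Differentiable ℝ fun s => ξ x s j := fun j =>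
    (((contDiff_pi.mp hξ) j).comp (contDiff_const.prodMk contDiff_id)).differentiable (by norm_num)
  -- atom abbreviations
  set d := Dbar x t with hd
  -- expanded continuity equation
  have hcont' : deriv (fun s => Dbar x s) t
      + ∑ j, (Dbar x t * fderiv ℝ (fun y => ubar y t j) x (Pi.single j 1)
          + ubar x t j * fderiv ℝ (fun y => Dbar y t) x (Pi.single j 1)) = 0 := by
    have := hcont x t
    rw [Finset.sum_congr rfl fun j _ =>
      fmul_aux (fun y => Dbar y t) (fun y => ubar y t j) x (Pi.single j 1)
        ((hD1 t).differentiableAt) ((hu1 t j).differentiableAt)] at this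
    exact this
  have key := alg_aux (Dbar x t) (deriv (fun s => Dbar x s) t)
    (fun j => fderiv ℝ (fun y => Dbar y t) x (Pi.single j 1))
    (ubar x t) (ξ x t)
    (fun j => deriv (fun s => ξ x s j) t)
    (fun j k => fderiv ℝ (fun y => ubar y t k) x (Pi.single j 1))
    (fun j k => fderiv ℝ (fun y => ξ y t k) x (Pi.single j 1))
    hcont' i
  -- rewrite the goal
  rw [hu' x t i, hD' x t]
  -- directional derivatives as sums of partials
  rw [fdir_aux (fun y => ξ y t i) x (ubar x t), fdir_aux (fun y => ubar y t i) x (ξ x t)]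
  -- divergence of D̄ξ
  rw [Finset.sum_congr rfl fun j _ =>
    fmul_aux (fun y => Dbar y t) (fun y => ξ y t j) x (Pi.single j 1)
      ((hD1 t).differentiableAt) ((hx1 t j).differentiableAt)]
  -- time derivative of the product
  rw [deriv_fun_mul (hDt1.differentiableAt) ((hxt1 i).differentiableAt)]
  -- expand the curl term
  have e1 : ∀ k : Fin 3, k + 2 + 1 = k := by decide
  have e2 : ∀ k : Fin 3, k + 2 + 2 = k + 1 := by decide
  have e3 : ∀ k : Fin 3, k + 1 + 1 = k + 2 := by decide
  have e4 : ∀ k : Fin 3, k + 1 + 2 = k := by decide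
  have htriple : ∀ a b v : Fin 3,
      fderiv ℝ (fun y => ubar y t a * (Dbar y t * ξ y t b)) x (Pi.single v 1)
        = ubar x t a * (Dbar x t * fderiv ℝ (fun y => ξ y t b) x (Pi.single v 1)
            + ξ x t b * fderiv ℝ (fun y => Dbar y t) x (Pi.single v 1))
          + (Dbar x t * ξ x t b) * fderiv ℝ (fun y => ubar y t a) x (Pi.single v 1) := by
    intro a b v
    rw [fmul_aux (fun y => ubar y t a) (fun y => Dbar y t * ξ y t b) x (Pi.single v 1)
      ((hu1 t a).differentiableAt) (((hD1 t).differentiableAt).mul ((hx1 t b).differentiableAt)),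
      fmul_aux (fun y => Dbar y t) (fun y => ξ y t b) x (Pi.single v 1)
      ((hD1 t).differentiableAt) ((hx1 t b).differentiableAt)]
  have hsub : ∀ a b a' b' v : Fin 3,
      fderiv ℝ (fun y => ubar y t a * (Dbar y t * ξ y t b)
          - ubar y t a' * (Dbar y t * ξ y t b')) x (Pi.single v 1)
        = fderiv ℝ (fun y => ubar y t a * (Dbar y t * ξ y t b)) x (Pi.single v 1)
          - fderiv ℝ (fun y => ubar y t a' * (Dbar y t * ξ y t b')) x (Pi.single v 1) := by
    intro a b a' b' v
    rw [fderiv_fun_sub (f := fun y => ubar y t a * (Dbar y t * ξ y t b))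
        (g := fun y => ubar y t a' * (Dbar y t * ξ y t b')) (((hu1 t a).differentiableAt).mul
        (((hD1 t).differentiableAt).mul ((hx1 t b).differentiableAt)))
      (((hu1 t a').differentiableAt).mul
        (((hD1 t).differentiableAt).mul ((hx1 t b').differentiableAt)))]
    simp
  have hcurl : curl3 (fun y => cross (ubar y t) (fun j => Dbar y t * ξ y t j)) x i
      = fderiv ℝ (fun y => ubar y t i * (Dbar y t * ξ y t (i+1))
          - ubar y t (i+1) * (Dbar y t * ξ y t i)) x (Pi.single (i+1) 1)
        - fderiv ℝ (fun y => ubar y t (i+2) * (Dbar y t * ξ y t i)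
          - ubar y t i * (Dbar y t * ξ y t (i+2))) x (Pi.single (i+2) 1) := by
    simp only [curl3, cross, e1, e2, e3, e4]
  rw [hcurl, hsub, hsub, htriple, htriple, htriple, htriple]
  linear_combination key
end
end

section
/- Liouville's formula for the Jacobian of a flow. Let u : ℝⁿ × ℝ → ℝⁿ be smooth and let φ : ℝ × ℝⁿ → ℝⁿ be smooth with ∂ₜφ(t,x₀) = u(φ(t,x₀), t) for all (t,x₀) and φ(0,x₀) = x₀. Then the Jacobian determinant J(t,x₀) := det(D_{x₀}φ(t,x₀)) satisfies ∂ₜJ(t,x₀) = (div u)(φ(t,x₀), t) · J(t,x₀) for all (t,x₀), with J(0,x₀) = 1. -/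
open scoped BigOperators

noncomputable section

open Matrix

open scoped BigOperators

noncomputable section

/-- Derivative of the determinant, column version. -/
lemma hasDerivAt_det_col {n : ℕ} (A : ℝ → Matrix (Fin n) (Fin n) ℝ)
    (B : Matrix (Fin n) (Fin n) ℝ) (t : ℝ)
    (h : ∀ i j, HasDerivAt (fun s => A s i j) (B i j) t) :
    HasDerivAt (fun s => (A s).det)
      (∑ i, ((A t).updateCol i (fun r => B r i)).det) t := by
  classical
  have key : (fun s => (A s).det)
      = fun s => ∑ σ : Equiv.Perm (Fin n),
          (((Equiv.Perm.sign σ : ℤ) : ℝ)) * ∏ i, A s (σ i) i := by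
    funext s
    rw [Matrix.det_apply']
  rw [key]
  have H : HasDerivAt
      (fun s => ∑ σ : Equiv.Perm (Fin n),
          (((Equiv.Perm.sign σ : ℤ) : ℝ)) * ∏ i, A s (σ i) i)
      (∑ σ : Equiv.Perm (Fin n), (((Equiv.Perm.sign σ : ℤ) : ℝ)) *
          ∑ i, (∏ j ∈ Finset.univ.erase i, A t (σ j) j) * B (σ i) i) t := by
    apply HasDerivAt.fun_sum
    intro σ _
    have := (HasDerivAt.finset_prod (u := Finset.univ)
      (f := fun i s => A s (σ i) i) (f' := fun i => B (σ i) i)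
      (fun i _ => h (σ i) i)).const_mul (((Equiv.Perm.sign σ : ℤ) : ℝ))
    simpa [smul_eq_mul] using this
  convert H using 1
  have expand : ∀ i : Fin n, ((A t).updateCol i (fun r => B r i)).det
      = ∑ σ : Equiv.Perm (Fin n), (((Equiv.Perm.sign σ : ℤ) : ℝ)) *
          ((∏ j ∈ Finset.univ.erase i, A t (σ j) j) * B (σ i) i) := by
    intro i
    rw [Matrix.det_apply']
    refine Finset.sum_congr rfl fun σ _ => ?_
    congr 1
    rw [← Finset.mul_prod_erase Finset.univ _ (Finset.mem_univ i), mul_comm]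
    congr 1
    · exact Finset.prod_congr rfl fun j hj => by
        simp [Matrix.updateCol_apply, Finset.ne_of_mem_erase hj]
    · simp [Matrix.updateCol_apply]
  simp_rw [expand]
  rw [Finset.sum_comm]
  simp [Finset.mul_sum]

/-- Derivative of the determinant, row version. -/
lemma hasDerivAt_det_row {n : ℕ} (A : ℝ → Matrix (Fin n) (Fin n) ℝ)
    (B : Matrix (Fin n) (Fin n) ℝ) (t : ℝ)
    (h : ∀ i j, HasDerivAt (fun s => A s i j) (B i j) t) :
    HasDerivAt (fun s => (A s).det)
      (∑ i, ((A t).updateRow i (B i)).det) t := by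
  have h' : ∀ i j, HasDerivAt (fun s => (A s)ᵀ i j) (Bᵀ i j) t := fun i j => h j i
  have H := hasDerivAt_det_col (fun s => (A s)ᵀ) Bᵀ t h'
  simp only [Matrix.det_transpose] at H
  convert H using 2 with i
  rw [show (fun r => Bᵀ r i) = B i from rfl, Matrix.updateCol_transpose,
    Matrix.det_transpose]


/-- **Liouville's formula for the Jacobian of a flow.**
If `φ` is the flow of `u` with `φ(0,·) = id`, then the Jacobian determinant
`J(t,x₀) = det(D_{x₀}φ(t,x₀))` satisfies
`∂ₜJ(t,x₀) = (div u)(φ(t,x₀),t) · J(t,x₀)` and `J(0,x₀) = 1`. -/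
theorem liouville_formula
    {n : ℕ}
    (u : (Fin n → ℝ) → ℝ → (Fin n → ℝ))
    (φ : ℝ → (Fin n → ℝ) → (Fin n → ℝ))
    -- smoothness
    (hu : ContDiff ℝ (⊤ : ℕ∞) (fun p : (Fin n → ℝ) × ℝ => u p.1 p.2))
    (hφ : ContDiff ℝ (⊤ : ℕ∞) (fun p : ℝ × (Fin n → ℝ) => φ p.1 p.2))
    -- φ is the flow map of u, φ(0,·) = id
    (hflow : ∀ t x₀ i, deriv (fun s => φ s x₀ i) t = u (φ t x₀) t i)
    (hinit : ∀ x₀, φ 0 x₀ = x₀) :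
    ∀ t x₀,
      HasDerivAt (fun s => (jacobian (φ s) x₀).det)
        ((∑ i, fderiv ℝ (fun y => u y t i) (φ t x₀) (Pi.single i 1))
          * (jacobian (φ t) x₀).det) t
      ∧ (jacobian (φ 0) x₀).det = 1 := by
  intro t x₀
  classical
  constructor
  · -- main statement
    set A : ℝ → Matrix (Fin n) (Fin n) ℝ := fun s => jacobian (φ s) x₀ with hA
    set M : Matrix (Fin n) (Fin n) ℝ :=
      fun i k => fderiv ℝ (fun y => u y t i) (φ t x₀) (Pi.single k 1) with hM
    have hφi : ∀ i : Fin n, ContDiff ℝ (⊤:ℕ∞) (fun p : ℝ × (Fin n → ℝ) => φ p.1 p.2 i) :=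
      fun i => contDiff_pi.mp hφ i
    have hφdiff : ∀ i, Differentiable ℝ (fun p : ℝ × (Fin n → ℝ) => φ p.1 p.2 i) :=
      fun i => (hφi i).differentiable (by decide)
    have hw : ContDiff ℝ (⊤:ℕ∞) (fun x => φ t x) := by
      have : ContDiff ℝ (⊤:ℕ∞) (fun x : Fin n → ℝ => (t, x)) :=
        contDiff_const.prodMk contDiff_id
      exact hφ.comp this
    have entry : ∀ i j, HasDerivAt (fun s => A s i j) (∑ k, M i k * A t k j) t := by
      intro i j
      set Fi : ℝ × (Fin n → ℝ) → ℝ := fun p => φ p.1 p.2 i with hFidef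
      have hFi : ContDiff ℝ (⊤:ℕ∞) Fi := hφi i
      set G := fderiv ℝ Fi with hG
      have hGsmooth : ContDiff ℝ (⊤:ℕ∞) G := hFi.fderiv_right (le_refl _)
      have hGdiff : Differentiable ℝ G := hGsmooth.differentiable (by decide)
      -- (a) entries of A as values of G
      have ha : ∀ s, A s i j = G (s, x₀) ((0:ℝ), Pi.single j 1) := by
        intro s
        have hcurve : HasFDerivAt (fun y : Fin n → ℝ => (s, y))
            (ContinuousLinearMap.inr ℝ ℝ (Fin n → ℝ)) x₀ := hasFDerivAt_prodMk_right s x₀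
        have h1 : HasFDerivAt (fun y => φ s y i)
            ((G (s, x₀)).comp (ContinuousLinearMap.inr ℝ ℝ (Fin n → ℝ))) x₀ :=
          HasFDerivAt.comp x₀ ((hφdiff i (s, x₀)).hasFDerivAt) hcurve
        show fderiv ℝ (fun y => φ s y i) x₀ (Pi.single j 1) = _
        rw [h1.fderiv]
        rfl
      -- (c) derivative in s of the entry
      have hcurve : HasDerivAt (fun s : ℝ => (s, x₀)) ((1:ℝ), (0 : Fin n → ℝ)) t :=
        (hasDerivAt_id t).prodMk (hasDerivAt_const t x₀)
      have hcomp : HasDerivAt (fun s => G (s, x₀)) (fderiv ℝ G (t, x₀) (1, 0)) t :=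
        (hGdiff (t, x₀)).hasFDerivAt.comp_hasDerivAt t hcurve
      have hEval : HasDerivAt (fun s => G (s, x₀) ((0:ℝ), Pi.single j 1))
          (fderiv ℝ G (t, x₀) (1, 0) ((0:ℝ), Pi.single j 1)) t := by
        simpa using hcomp.clm_apply (hasDerivAt_const t ((0:ℝ), Pi.single j 1))
      -- (d) symmetry of second derivative
      have hsymm : fderiv ℝ G (t, x₀) (1, 0) ((0:ℝ), Pi.single j 1)
          = fderiv ℝ G (t, x₀) ((0:ℝ), Pi.single j 1) (1, 0) :=
        (hFi.contDiffAt.isSymmSndFDerivAt (by rw [minSmoothness_of_isRCLikeNormedField]; exact WithTop.coe_le_coe.mpr (le_top : (2:ℕ∞) ≤ ⊤))) _ _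
      -- (f) G (s,x) (1,0) = u (φ s x) s i
      have hfun : ∀ s x, G (s, x) ((1:ℝ), (0 : Fin n → ℝ)) = u (φ s x) s i := by
        intro s x
        have hc : HasDerivAt (fun s' : ℝ => (s', x)) ((1:ℝ), (0 : Fin n → ℝ)) s :=
          (hasDerivAt_id s).prodMk (hasDerivAt_const s x)
        have h2 : HasDerivAt (fun s' => φ s' x i) (G (s, x) (1, 0)) s :=
          by have := (hφdiff i (s, x)).hasFDerivAt.comp_hasDerivAt s hc; exact this
        rw [← hflow s x i, h2.deriv]
      -- (e) exchange: the mixed derivative as x-derivative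
      have hleft : HasFDerivAt (fun x => G (t, x) ((1:ℝ), (0 : Fin n → ℝ)))
          (((fderiv ℝ G (t, x₀)).comp (ContinuousLinearMap.inr ℝ ℝ (Fin n → ℝ))).flip
            ((1:ℝ), (0 : Fin n → ℝ))) x₀ := by
        have hGx : HasFDerivAt (fun x => G (t, x))
            ((fderiv ℝ G (t, x₀)).comp (ContinuousLinearMap.inr ℝ ℝ (Fin n → ℝ))) x₀ :=
          (hGdiff (t, x₀)).hasFDerivAt.comp x₀ (hasFDerivAt_prodMk_right t x₀)
        simpa using hGx.clm_apply (hasFDerivAt_const ((1:ℝ), (0 : Fin n → ℝ)) x₀)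
      have hkey : fderiv ℝ (fun x => u (φ t x) t i) x₀ (Pi.single j 1)
          = fderiv ℝ G (t, x₀) ((0:ℝ), Pi.single j 1) ((1:ℝ), (0 : Fin n → ℝ)) := by
        have hre : (fun x => G (t, x) ((1:ℝ), (0 : Fin n → ℝ)))
            = fun x => u (φ t x) t i := funext fun x => hfun t x
        rw [← hre, hleft.fderiv]
        rfl
      -- (g) chain rule
      have hv : ContDiff ℝ (⊤:ℕ∞) (fun y => u y t i) := by
        have h0 : ContDiff ℝ (⊤:ℕ∞) (fun y : Fin n → ℝ => u y t) :=
          hu.comp (contDiff_id.prodMk contDiff_const)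
        exact contDiff_pi.mp h0 i
      have hwd : HasFDerivAt (fun x => φ t x) (fderiv ℝ (fun x => φ t x) x₀) x₀ :=
        ((hw.differentiable (by decide)) x₀).hasFDerivAt
      have hchain : HasFDerivAt (fun x => u (φ t x) t i)
          ((fderiv ℝ (fun y => u y t i) (φ t x₀)).comp (fderiv ℝ (fun x => φ t x) x₀)) x₀ :=
        HasFDerivAt.comp x₀ ((hv.differentiable (by decide) (φ t x₀)).hasFDerivAt) hwd
      have hcomp_k : ∀ k, fderiv ℝ (fun x => φ t x) x₀ (Pi.single j 1) k = A t k j := by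
        intro k
        have hk : HasFDerivAt (fun x => φ t x k)
            ((ContinuousLinearMap.proj (R := ℝ) (φ := fun _ : Fin n => ℝ) k).comp
              (fderiv ℝ (fun x => φ t x) x₀)) x₀ :=
          HasFDerivAt.comp x₀ (ContinuousLinearMap.hasFDerivAt
            (ContinuousLinearMap.proj (R := ℝ) (φ := fun _ : Fin n => ℝ) k)) hwd
        have : A t k j = fderiv ℝ (fun x => φ t x k) x₀ (Pi.single j 1) := rfl
        rw [this, hk.fderiv]
        rfl
      have hlin : fderiv ℝ (fun y => u y t i) (φ t x₀)
            (fderiv ℝ (fun x => φ t x) x₀ (Pi.single j 1))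
          = ∑ k, M i k * A t k j := by
        set L := fderiv ℝ (fun y => u y t i) (φ t x₀) with hL
        set b := fderiv ℝ (fun x => φ t x) x₀ (Pi.single j 1) with hb
        have hbs : b = ∑ k, (b k) • (Pi.single k 1 : Fin n → ℝ) := by
          rw [← Finset.univ_sum_single b]
          refine Finset.sum_congr rfl fun k _ => ?_
          rw [← Pi.single_smul, smul_eq_mul, mul_one]
          simp
        rw [hbs, map_sum]
        refine Finset.sum_congr rfl fun k _ => ?_
        rw [ContinuousLinearMap.map_smul, hcomp_k k]
        simp [hM, hL, smul_eq_mul, mul_comm]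
      -- assemble the entry derivative
      have hval : fderiv ℝ G (t, x₀) (1, 0) ((0:ℝ), Pi.single j 1) = ∑ k, M i k * A t k j := by
        rw [hsymm, ← hkey, hchain.fderiv]
        exact hlin
      have hfin : (fun s => G (s, x₀) ((0:ℝ), Pi.single j 1)) = fun s => A s i j :=
        funext fun s => (ha s).symm
      rw [← hval]
      rw [← hfin]
      exact hEval
    -- apply the determinant derivative lemma
    have main := hasDerivAt_det_row A (M * A t) t
      (fun i j => by simpa [Matrix.mul_apply] using entry i j)
    have hsum : ∑ i, ((A t).updateRow i ((M * A t) i)).det = (∑ i, M i i) * (A t).det := by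
      rw [Finset.sum_mul]
      refine Finset.sum_congr rfl fun i _ => ?_
      have hrow : (M * A t) i = ∑ k, M i k • A t k := by
        funext j'
        simp [Matrix.mul_apply]
      rw [hrow, Matrix.det_updateRow_sum]
      simp [smul_eq_mul]
    rw [hsum] at main
    exact main
  · -- initial condition
    have hJ : jacobian (φ 0) x₀ = 1 := by
      funext i j
      have hfun : (fun y => φ 0 y i) = fun y : Fin n → ℝ => y i :=
        funext fun y => by rw [hinit y]
      show fderiv ℝ (fun y => φ 0 y i) x₀ (Pi.single j 1) = (1 : Matrix (Fin n) (Fin n) ℝ) i j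
      rw [hfun]
      rw [show (fun y : Fin n → ℝ => y i)
          = (ContinuousLinearMap.proj (R := ℝ) (φ := fun _ : Fin n => ℝ) i) from rfl]
      rw [ContinuousLinearMap.fderiv]
      simp [Matrix.one_apply, Pi.single_apply, eq_comm]
    rw [hJ, Matrix.det_one]
end
end
end

section
/- Cauchy's solution of the homogeneous u′-equation (frozen-in vector fields). Let u : ℝⁿ × ℝ → ℝⁿ be smooth, and let φ : ℝ × ℝⁿ → ℝⁿ be smooth with ∂ₜφ(t,x₀) = u(φ(t,x₀), t), φ(0,x₀) = x₀, and φ(t,·) a diffeomorphism of ℝⁿ for every t (with smooth dependence of the inverse on (t,x)). Given a smooth ξ⁰ : ℝⁿ → ℝⁿ, define the time-dependent vector field ξ by ξ(φ(t,x₀), t) = D_{x₀}φ(t,x₀) · ξ⁰(x₀). Then ξ is smooth, ξ(x,0) = ξ⁰(x), and ξ satisfies the homogeneous equation ∂ₜξ + (u·∇)ξ − (ξ·∇)u = 0 everywhere. -/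
open scoped BigOperators

noncomputable section

section Helpers

variable {E F G : Type*} [NormedAddCommGroup E] [NormedSpace ℝ E]
  [NormedAddCommGroup F] [NormedSpace ℝ F] [NormedAddCommGroup G] [NormedSpace ℝ G]

/-- partial derivative in first coordinate -/
lemma fderiv_partial_fst_s16 {f : E × F → G} {a : E} {b : F}
    (hf : DifferentiableAt ℝ f (a, b)) (w : E) :
    fderiv ℝ (fun s => f (s, b)) a w = fderiv ℝ f (a, b) (w, 0) := by
  have h : HasFDerivAt (fun s => f (s, b))
      ((fderiv ℝ f (a, b)).comp (ContinuousLinearMap.inl ℝ E F)) a :=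
    hf.hasFDerivAt.comp a (hasFDerivAt_prodMk_left a b)
  simp [h.fderiv]

lemma fderiv_partial_snd {f : E × F → G} {a : E} {b : F}
    (hf : DifferentiableAt ℝ f (a, b)) (w : F) :
    fderiv ℝ (fun y => f (a, y)) b w = fderiv ℝ f (a, b) (0, w) := by
  have h : HasFDerivAt (fun y => f (a, y))
      ((fderiv ℝ f (a, b)).comp (ContinuousLinearMap.inr ℝ E F)) b :=
    hf.hasFDerivAt.comp b (hasFDerivAt_prodMk_right a b)
  simp [h.fderiv]

/-- derivative of pointwise application of fderiv -/
lemma fderiv_fderiv_apply {f : E → G} (hf : ContDiff ℝ (⊤ : ℕ∞) f) (p v w : E) :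
    fderiv ℝ (fun q => fderiv ℝ f q w) p v = fderiv ℝ (fderiv ℝ f) p v w := by
  have hd : DifferentiableAt ℝ (fderiv ℝ f) p :=
    ((hf.fderiv_right (m := (⊤:ℕ∞)) (by simp)).differentiable (by simp)).differentiableAt
  have h : HasFDerivAt (fun q => fderiv ℝ f q w)
      ((ContinuousLinearMap.apply ℝ G w).comp (fderiv ℝ (fderiv ℝ f) p)) p :=
    (ContinuousLinearMap.apply ℝ G w).hasFDerivAt.comp p hd.hasFDerivAt
  simp [h.fderiv]

lemma contDiff_fderiv_apply {f : E → G} (hf : ContDiff ℝ (⊤ : ℕ∞) f) (w : E) :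
    ContDiff ℝ (⊤ : ℕ∞) (fun q => fderiv ℝ f q w) :=
  (ContinuousLinearMap.apply ℝ G w).contDiff.comp
    (hf.fderiv_right (m := (⊤:ℕ∞)) (by simp))

/-- coordinate of fderiv of a Pi-valued map -/
lemma fderiv_coord {ι : Type*} [Fintype ι] {g : E → ι → ℝ} {x : E}
    (hg : DifferentiableAt ℝ g x) (v : E) (k : ι) :
    fderiv ℝ (fun y => g y k) x v = fderiv ℝ g x v k := by
  have h : HasFDerivAt (fun y => g y k)
      ((ContinuousLinearMap.proj (R := ℝ) (φ := fun _ : ι => ℝ) k).comp (fderiv ℝ g x)) x := by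
    exact (ContinuousLinearMap.proj (R := ℝ) (φ := fun _ : ι => ℝ) k).hasFDerivAt.comp x
      hg.hasFDerivAt
  simp [h.fderiv]

end Helpers

/-- **Cauchy's solution of the homogeneous u′-equation (frozen-in vector fields).**
Let `φ` be the flow of `u` with smooth inverse, and define `ξ` by
`ξ(φ(t,x₀),t) = D_{x₀}φ(t,x₀)·ξ⁰(x₀)`.  Then `ξ` is smooth, `ξ(·,0) = ξ⁰`, and
`ξ` satisfies `∂ₜξ + (u·∇)ξ − (ξ·∇)u = 0` everywhere. -/
theorem cauchy_solution_homogeneous_u_prime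
    {n : ℕ}
    (u : (Fin n → ℝ) → ℝ → (Fin n → ℝ))
    (φ η : ℝ → (Fin n → ℝ) → (Fin n → ℝ))
    (ξ0 : (Fin n → ℝ) → (Fin n → ℝ))
    (ξ : (Fin n → ℝ) → ℝ → (Fin n → ℝ))
    -- smoothness
    (hu : ContDiff ℝ (⊤ : ℕ∞) (fun p : (Fin n → ℝ) × ℝ => u p.1 p.2))
    (hφ : ContDiff ℝ (⊤ : ℕ∞) (fun p : ℝ × (Fin n → ℝ) => φ p.1 p.2))
    (hξ0 : ContDiff ℝ (⊤ : ℕ∞) ξ0)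
    -- φ is the flow map of u with φ(0,·) = id
    (hflow : ∀ t x₀ i, deriv (fun s => φ s x₀ i) t = u (φ t x₀) t i)
    (hinit : ∀ x₀, φ 0 x₀ = x₀)
    -- φ(t,·) is a diffeomorphism of ℝⁿ for every t, with smooth inverse η(t,·)
    (hη : ContDiff ℝ (⊤ : ℕ∞) (fun p : ℝ × (Fin n → ℝ) => η p.1 p.2))
    (hφη : ∀ t x, φ t (η t x) = x)
    (hηφ : ∀ t x, η t (φ t x) = x)
    -- definition of ξ : ξ(φ(t,x₀),t) = D_{x₀}φ(t,x₀)·ξ⁰(x₀)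
    (hξdef : ∀ t x₀, ξ (φ t x₀) t = (jacobian (φ t) x₀).mulVec (ξ0 x₀)) :
    -- conclusion : ξ is smooth, ξ(·,0) = ξ⁰, and ξ solves the homogeneous equation
    ContDiff ℝ (⊤ : ℕ∞) (fun p : (Fin n → ℝ) × ℝ => ξ p.1 p.2)
    ∧ (∀ x, ξ x 0 = ξ0 x)
    ∧ (∀ x t i,
        deriv (fun s => ξ x s i) t
          + fderiv ℝ (fun y => ξ y t i) x (u x t)
          - fderiv ℝ (fun y => u y t i) x (ξ x t) = 0) := by
  -- coordinate functions of the joint flow map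
  set Φ : ℝ × (Fin n → ℝ) → (Fin n → ℝ) := fun p => φ p.1 p.2 with hΦdef
  have hFi : ∀ i, ContDiff ℝ (⊤ : ℕ∞) (fun p : ℝ × (Fin n → ℝ) => φ p.1 p.2 i) :=
    fun i => contDiff_pi.1 hφ i
  have hFdiff : ∀ (i) (p : ℝ × (Fin n → ℝ)),
      DifferentiableAt ℝ (fun p : ℝ × (Fin n → ℝ) => φ p.1 p.2 i) p :=
    fun i p => ((hFi i).differentiable (by simp)).differentiableAt
  have hφdiff : ∀ (p : ℝ × (Fin n → ℝ)), DifferentiableAt ℝ Φ p :=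
    fun p => (hφ.differentiable (by simp)).differentiableAt
  -- the Jacobian entries in terms of the joint map
  have hJ : ∀ t x₀ i j, jacobian (φ t) x₀ i j
      = fderiv ℝ (fun p : ℝ × (Fin n → ℝ) => φ p.1 p.2 i) (t, x₀) (0, Pi.single j 1) := by
    intro t x₀ i j
    exact fderiv_partial_snd (hFdiff i (t, x₀)) _
  -- the time derivative of the flow as a fderiv of the joint map
  have hU : ∀ t x₀ i,
      fderiv ℝ (fun p : ℝ × (Fin n → ℝ) => φ p.1 p.2 i) (t, x₀) (1, 0)
        = u (φ t x₀) t i := by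
    intro t x₀ i
    rw [← fderiv_partial_fst_s16 (hFdiff i (t, x₀)) 1, ← hflow t x₀ i]
    rfl
  -- smoothness of ξ
  have hξform : ∀ x t, ξ x t = fun i => ∑ j,
      fderiv ℝ (fun p : ℝ × (Fin n → ℝ) => φ p.1 p.2 i) (t, η t x) (0, Pi.single j 1)
        * ξ0 (η t x) j := by
    intro x t
    have := hξdef t (η t x)
    rw [hφη] at this
    rw [this]
    funext i
    simp only [Matrix.mulVec, dotProduct]
    congr 1
    funext j
    rw [hJ]
  have hsmooth : ContDiff ℝ (⊤ : ℕ∞) (fun p : (Fin n → ℝ) × ℝ => ξ p.1 p.2) := by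
    have : (fun p : (Fin n → ℝ) × ℝ => ξ p.1 p.2) = fun p : (Fin n → ℝ) × ℝ =>
        (fun i => ∑ j,
          fderiv ℝ (fun q : ℝ × (Fin n → ℝ) => φ q.1 q.2 i) (p.2, η p.2 p.1) (0, Pi.single j 1)
            * ξ0 (η p.2 p.1) j) := by
      funext p
      exact hξform p.1 p.2
    rw [this]
    apply contDiff_pi.2
    intro i
    apply ContDiff.sum
    intro j _
    have hc : ContDiff ℝ (⊤ : ℕ∞)
        (fun p : (Fin n → ℝ) × ℝ => ((p.2, η p.2 p.1) : ℝ × (Fin n → ℝ))) :=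
      contDiff_snd.prodMk (hη.comp (contDiff_snd.prodMk contDiff_fst))
    exact ((contDiff_fderiv_apply (hFi i) (0, Pi.single j 1)).comp hc).mul
      ((contDiff_pi.1 hξ0 j).comp ((hη.comp (contDiff_snd.prodMk contDiff_fst)).comp contDiff_id))
  refine ⟨hsmooth, ?_, ?_⟩
  · -- initial condition
    intro x
    have h0 := hξdef 0 x
    rw [hinit x] at h0
    rw [h0]
    funext i
    have hid : (fun y : Fin n → ℝ => φ 0 y i) = fun y => y i := by
      funext y; rw [hinit y]
    simp only [Matrix.mulVec, dotProduct, jacobian, hid]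
    have : ∀ j : Fin n, fderiv ℝ (fun y : Fin n → ℝ => y i) x (Pi.single j 1)
        = (Pi.single j (1:ℝ) : Fin n → ℝ) i := by
      intro j
      rw [fderiv_coord differentiableAt_fun_id (Pi.single j 1) i, fderiv_fun_id]
      rfl
    simp only [this, Pi.single_apply]
    simp [Finset.sum_ite_eq]
  · -- the PDE
    intro x t i
    set x₀ := η t x with hx₀
    have hx : φ t x₀ = x := hφη t x
    -- Ξi : the unknown as a function of (x, t)
    have hΞi : ContDiff ℝ (⊤ : ℕ∞) (fun p : (Fin n → ℝ) × ℝ => ξ p.1 p.2 i) :=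
      contDiff_pi.1 hsmooth i
    have hΞdiff : ∀ p : (Fin n → ℝ) × ℝ,
        DifferentiableAt ℝ (fun p : (Fin n → ℝ) × ℝ => ξ p.1 p.2 i) p :=
      fun p => (hΞi.differentiable (by simp)).differentiableAt
    -- the curve s ↦ φ s x₀
    have hcurve : ∀ s, HasDerivAt (fun s => φ s x₀) (u (φ s x₀) s) s := by
      intro s
      apply hasDerivAt_pi.2
      intro k
      have hdk : DifferentiableAt ℝ (fun s => φ s x₀ k) s := by
        exact ((hFi k).comp (contDiff_id.prodMk contDiff_const)).differentiable
          (by simp) |>.differentiableAt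
      have := hdk.hasDerivAt
      rwa [hflow s x₀ k] at this
    -- g = ξ along the flow
    set g : ℝ → ℝ := fun s => ξ (φ s x₀) s i with hgdef
    -- Way 1 : chain rule through Ξ
    have hg1 : HasDerivAt g (fderiv ℝ (fun p : (Fin n → ℝ) × ℝ => ξ p.1 p.2 i)
        (x, t) (u x t, 1)) t := by
      have hc1 : HasDerivAt (fun s => ((φ s x₀, s) : (Fin n → ℝ) × ℝ)) (u (φ t x₀) t, 1) t :=
        (hcurve t).prodMk (hasDerivAt_id t)
      have hcomp' := (hΞdiff (φ t x₀, t)).hasFDerivAt.comp_hasDerivAt_of_eq t hc1 rfl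
      have hcomp : HasDerivAt g (fderiv ℝ (fun p : (Fin n → ℝ) × ℝ => ξ p.1 p.2 i)
          (φ t x₀, t) (u (φ t x₀) t, 1)) t := hcomp'
      rwa [hx] at hcomp
    have hway1 : deriv g t = deriv (fun s => ξ x s i) t
        + fderiv ℝ (fun y => ξ y t i) x (u x t) := by
      rw [hg1.deriv]
      have hsplit : ((u x t, 1) : (Fin n → ℝ) × ℝ) = (u x t, 0) + (0, 1) := by
        simp [Prod.ext_iff]
      rw [hsplit, map_add]
      have h1 : fderiv ℝ (fun p : (Fin n → ℝ) × ℝ => ξ p.1 p.2 i) (x, t) (u x t, 0)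
          = fderiv ℝ (fun y => ξ y t i) x (u x t) :=
        (fderiv_partial_fst_s16 (hΞdiff (x, t)) (u x t)).symm
      have h2 : fderiv ℝ (fun p : (Fin n → ℝ) × ℝ => ξ p.1 p.2 i) (x, t) (0, 1)
          = deriv (fun s => ξ x s i) t := by
        rw [← fderiv_partial_snd (hΞdiff (x, t)) 1]
        rfl
      rw [h1, h2, add_comm]
    -- Way 2 : differentiate the Cauchy formula
    set L := fderiv ℝ (fun z => u z t i) x with hLdef
    have hudiff : ∀ z, DifferentiableAt ℝ (fun z => u z t i) z := by
      intro z
      exact (((contDiff_pi.1 hu i).comp (contDiff_id.prodMk contDiff_const)).differentiable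
        (by simp)).differentiableAt
    have hAj : ∀ j : Fin n, HasDerivAt
        (fun s => fderiv ℝ (fun p : ℝ × (Fin n → ℝ) => φ p.1 p.2 i) (s, x₀) (0, Pi.single j 1))
        (L ((jacobian (φ t) x₀).mulVec (Pi.single j 1))) t := by
      intro j
      -- the function p ↦ ∂ⱼ φᵢ (p)
      set f : ℝ × (Fin n → ℝ) → ℝ :=
        fun p => fderiv ℝ (fun q : ℝ × (Fin n → ℝ) => φ q.1 q.2 i) p (0, Pi.single j 1)
        with hfdef
      have hfsm : ContDiff ℝ (⊤ : ℕ∞) f := contDiff_fderiv_apply (hFi i) _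
      have hfd : ∀ p, DifferentiableAt ℝ f p :=
        fun p => (hfsm.differentiable (by simp)).differentiableAt
      have hAd : DifferentiableAt ℝ (fun s => f (s, x₀)) t :=
        ((hfsm.comp (contDiff_id.prodMk contDiff_const)).differentiable (by simp)).differentiableAt
      have hφtd : DifferentiableAt ℝ (φ t) x₀ := by
        exact ((hφ.comp (contDiff_const.prodMk contDiff_id)).differentiable
          (by simp)).differentiableAt
      -- the j-th column of the Jacobian as a directional derivative
      have hcol : fderiv ℝ (φ t) x₀ (Pi.single j 1)
          = (jacobian (φ t) x₀).mulVec (Pi.single j 1) := by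
        funext k
        have h1 : fderiv ℝ (φ t) x₀ (Pi.single j 1) k
            = fderiv ℝ (fun y => φ t y k) x₀ (Pi.single j 1) :=
          (fderiv_coord hφtd _ k).symm
        rw [h1]
        simp [Matrix.mulVec, dotProduct, jacobian, Pi.single_apply]
      -- chain rule for y ↦ u(φ t y, t) i
      have e7 : fderiv ℝ (fun y => u (φ t y) t i) x₀ (Pi.single j 1)
          = L ((jacobian (φ t) x₀).mulVec (Pi.single j 1)) := by
        have h := fderiv_comp (𝕜 := ℝ) x₀ (hudiff (φ t x₀)) hφtd
        rw [hx] at h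
        calc fderiv ℝ (fun y => u (φ t y) t i) x₀ (Pi.single j 1)
            = (L.comp (fderiv ℝ (φ t) x₀)) (Pi.single j 1) := by rw [← h]; rfl
          _ = L (fderiv ℝ (φ t) x₀ (Pi.single j 1)) := rfl
          _ = _ := by rw [hcol]
      have hsymm : IsSymmSndFDerivAt ℝ (fun q : ℝ × (Fin n → ℝ) => φ q.1 q.2 i) (t, x₀) :=
        (hFi i).contDiffAt.isSymmSndFDerivAt (by
          rw [show ((2:WithTop ℕ∞)) = ((2:ℕ∞):WithTop ℕ∞) from rfl]
          rw [minSmoothness_of_isRCLikeNormedField]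
          exact WithTop.coe_le_coe.2 le_top)
      have hgd : DifferentiableAt ℝ
          (fun q : ℝ × (Fin n → ℝ) =>
            fderiv ℝ (fun q : ℝ × (Fin n → ℝ) => φ q.1 q.2 i) q ((1 : ℝ), (0 : Fin n → ℝ)))
          (t, x₀) :=
        ((contDiff_fderiv_apply (hFi i) (1, 0)).differentiable (by simp)).differentiableAt
      have k1 : deriv (fun s => f (s, x₀)) t = fderiv ℝ f (t, x₀) (1, 0) := by
        rw [← fderiv_apply_one_eq_deriv]; exact fderiv_partial_fst_s16 (hfd (t, x₀)) 1
      have k2 : fderiv ℝ f (t, x₀) ((1:ℝ), (0 : Fin n → ℝ))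
          = fderiv ℝ (fderiv ℝ (fun q : ℝ × (Fin n → ℝ) => φ q.1 q.2 i)) (t, x₀)
            (1, 0) (0, Pi.single j 1) := by
        exact fderiv_fderiv_apply (hFi i) _ _ _
      have k3 := hsymm ((1:ℝ), (0 : Fin n → ℝ)) ((0:ℝ), Pi.single j 1)
      have k4 : fderiv ℝ (fderiv ℝ (fun q : ℝ × (Fin n → ℝ) => φ q.1 q.2 i)) (t, x₀)
            (0, Pi.single j 1) (1, 0)
          = fderiv ℝ (fun q : ℝ × (Fin n → ℝ) =>
              fderiv ℝ (fun q : ℝ × (Fin n → ℝ) => φ q.1 q.2 i) q ((1:ℝ), (0 : Fin n → ℝ)))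
            (t, x₀) (0, Pi.single j 1) :=
        (fderiv_fderiv_apply (hFi i) _ _ _).symm
      have k5 : fderiv ℝ (fun q : ℝ × (Fin n → ℝ) =>
              fderiv ℝ (fun q : ℝ × (Fin n → ℝ) => φ q.1 q.2 i) q ((1:ℝ), (0 : Fin n → ℝ)))
            (t, x₀) (0, Pi.single j 1)
          = fderiv ℝ (fun y =>
              fderiv ℝ (fun q : ℝ × (Fin n → ℝ) => φ q.1 q.2 i) (t, y) ((1:ℝ), (0 : Fin n → ℝ)))
            x₀ (Pi.single j 1) :=
        (fderiv_partial_snd hgd _).symm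
      have k6 : (fun y =>
            fderiv ℝ (fun q : ℝ × (Fin n → ℝ) => φ q.1 q.2 i) (t, y) ((1:ℝ), (0 : Fin n → ℝ)))
          = fun y => u (φ t y) t i :=
        funext fun y => hU t y i
      have key : deriv (fun s => f (s, x₀)) t
          = L ((jacobian (φ t) x₀).mulVec (Pi.single j 1)) := by
        rw [k1, k2, k3, k4, k5, k6]
        exact e7
      have := hAd.hasDerivAt
      rwa [key] at this
    -- Way 2 : g is the Cauchy formula, differentiate it
    have hgeq : g = fun s => ∑ j,
        fderiv ℝ (fun p : ℝ × (Fin n → ℝ) => φ p.1 p.2 i) (s, x₀) (0, Pi.single j 1)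
          * ξ0 x₀ j := by
      funext s
      show ξ (φ s x₀) s i = _
      rw [hξdef s x₀]
      simp only [Matrix.mulVec, dotProduct]
      exact Finset.sum_congr rfl fun j _ => by rw [hJ]
    have hg2 : HasDerivAt g
        (∑ j, L ((jacobian (φ t) x₀).mulVec (Pi.single j 1)) * ξ0 x₀ j) t := by
      rw [hgeq]
      exact HasDerivAt.fun_sum fun j _ => (hAj j).mul_const (ξ0 x₀ j)
    -- identify the sum with L (ξ x t)
    have hξxt : ξ x t = (jacobian (φ t) x₀).mulVec (ξ0 x₀) := by
      rw [← hx, hξdef t x₀]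
    have hsum : ∑ j, L ((jacobian (φ t) x₀).mulVec (Pi.single j 1)) * ξ0 x₀ j
        = L (ξ x t) := by
      have h1 : ∀ j : Fin n, L ((jacobian (φ t) x₀).mulVec (Pi.single j 1)) * ξ0 x₀ j
          = L (ξ0 x₀ j • (jacobian (φ t) x₀).mulVec (Pi.single j 1)) := by
        intro j
        rw [map_smul, smul_eq_mul, mul_comm]
      have h2 : ∑ j, ξ0 x₀ j • (jacobian (φ t) x₀).mulVec (Pi.single j 1)
          = (jacobian (φ t) x₀).mulVec (ξ0 x₀) := by
        funext k
        simp [Matrix.mulVec, dotProduct, Pi.single_apply, Finset.sum_apply,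
          mul_comm]
      rw [Finset.sum_congr rfl fun j _ => h1 j, ← map_sum, h2, ← hξxt]
    have hfinal : deriv (fun s => ξ x s i) t + fderiv ℝ (fun y => ξ y t i) x (u x t)
        = L (ξ x t) := by
      rw [← hway1, hg2.deriv, hsum]
    rw [show deriv (fun s => ξ x s i) t + fderiv ℝ (fun y => ξ y t i) x (u x t)
          - fderiv ℝ (fun y => u y t i) x (ξ x t)
        = (deriv (fun s => ξ x s i) t + fderiv ℝ (fun y => ξ y t i) x (u x t)) - L (ξ x t)
      from rfl, hfinal, sub_self]
end
end
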